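/- arXiv:2603.11735 — 4 statements merged into one kernel-verified Lean document; each statement's English description precedes it below -/
import Mathlib

section
/- Let f:ℝ²→ℝ be measurable and suppose that the function x ↦ |x|² f(x²) is Lebesgue integrable on ℝ², where x² denotes the complex square under the identification of ℝ² with ℂ. Then f is Lebesgue integrable on ℝ² and ∫_{ℝ²} |x|² f(x²) dx = (1/2)∫_{ℝ²} f(y) dy. -/
open MeasureTheory Filter Real Set

namespace Stmt12Aux

/-- The real line inside `ℂ` is a null set. -/
lemma null_real_axis : volume {w : ℂ | w.im = 0} = 0 := by
  have h : {w : ℂ | w.im = 0} = (LinearMap.ker Complex.imLm : Submodule ℝ ℂ) := by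
    ext w; simp [LinearMap.mem_ker, Complex.imLm]
  rw [h]
  apply Measure.addHaar_submodule
  intro htop
  have : Complex.I ∈ (LinearMap.ker Complex.imLm : Submodule ℝ ℂ) := htop ▸ Submodule.mem_top
  simp [LinearMap.mem_ker, Complex.imLm] at this

/-- derivative of squaring, over ℝ. -/
lemma hasFDeriv_sq (z : ℂ) :
    HasFDerivAt (fun w : ℂ => w ^ 2)
      (((ContinuousLinearMap.smulRight (1 : ℂ →L[ℂ] ℂ) (2 * z)).restrictScalars ℝ)) z := by
  have h : HasDerivAt (fun w : ℂ => w ^ 2) (2 * z) z := by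
    simpa using hasDerivAt_pow 2 z
  exact h.hasFDerivAt.restrictScalars ℝ

lemma det_sq (z : ℂ) :
    ((ContinuousLinearMap.smulRight (1 : ℂ →L[ℂ] ℂ) (2 * z)).restrictScalars ℝ).det
      = Complex.normSq (2 * z) := by
  have h : (((ContinuousLinearMap.smulRight (1 : ℂ →L[ℂ] ℂ) (2 * z)).restrictScalars ℝ)
      : ℂ →ₗ[ℝ] ℂ) = Algebra.lmul ℝ ℂ (2 * z) := by
    ext w
    simp [mul_comm]
  rw [ContinuousLinearMap.det, h, ← Algebra.norm_complex_apply]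
  rfl

end Stmt12Aux

/-- change of variables `y = x²` (complex square):
`∫_{ℝ²} |x|² f(x²) dx = (1/2) ∫_{ℝ²} f(y) dy`. -/
theorem stmt_12 (f : ℂ → ℝ) (hf : Measurable f)
    (hint : Integrable (fun x : ℂ => ‖x‖ ^ 2 * f (x ^ 2))) :
    Integrable f ∧ (∫ x : ℂ, ‖x‖ ^ 2 * f (x ^ 2)) = (1 / 2) * ∫ y : ℂ, f y := by
  set S : Set ℂ := {z | 0 < z.im} with hS
  set T : Set ℂ := {z | z.im < 0} with hT
  set A : Set ℂ := {w | ¬ (w.im = 0 ∧ 0 ≤ w.re)} with hA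
  have hSm : MeasurableSet S := measurableSet_lt measurable_const Complex.measurable_im
  have hTm : MeasurableSet T := measurableSet_lt Complex.measurable_im measurable_const
  -- injectivity
  have hinjS : InjOn (fun z : ℂ => z ^ 2) S := by
    intro z hz w hw h
    have h2 : (z - w) * (z + w) = 0 := by ring_nf; linear_combination h
    rcases mul_eq_zero.mp h2 with h3 | h3
    · exact sub_eq_zero.mp h3
    · exfalso
      have : z.im + w.im = 0 := by
        have := congrArg Complex.im h3; simpa [Complex.add_im] using this
      have hz' : 0 < z.im := hz
      have hw' : 0 < w.im := hw
      linarith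
  have hinjT : InjOn (fun z : ℂ => z ^ 2) T := by
    intro z hz w hw h
    have h2 : (z - w) * (z + w) = 0 := by ring_nf; linear_combination h
    rcases mul_eq_zero.mp h2 with h3 | h3
    · exact sub_eq_zero.mp h3
    · exfalso
      have : z.im + w.im = 0 := by
        have := congrArg Complex.im h3; simpa [Complex.add_im] using this
      have hz' : z.im < 0 := hz
      have hw' : w.im < 0 := hw
      linarith
  -- images
  have himS : (fun z : ℂ => z ^ 2) '' S = A := by
    ext w
    constructor
    · rintro ⟨z, hz, rfl⟩
      rintro ⟨him, hre⟩
      have him' : z.re * z.im + z.im * z.re = 0 := by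
        simpa [pow_two, Complex.mul_im] using him
      have hz' : 0 < z.im := hz
      have hprod : z.re * z.im = 0 := by linarith
      have hre0 : z.re = 0 := by
        rcases mul_eq_zero.mp hprod with h | h
        · exact h
        · linarith
      have hre2 : (z ^ 2).re = -(z.im * z.im) := by
        simp [pow_two, Complex.mul_re, hre0]
      rw [hre2] at hre
      nlinarith
    · intro hw
      obtain ⟨z, hz⟩ := IsAlgClosed.exists_pow_nat_eq w (n := 2) (by norm_num)
      have hzim : z.im ≠ 0 := by
        intro h0
        apply hw
        constructor
        · have : (z ^ 2).im = 2 * z.re * z.im := by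
            simp [pow_two, Complex.mul_im]; ring
          rw [← hz, this, h0]; ring
        · have : (z ^ 2).re = z.re * z.re - z.im * z.im := by
            simp [pow_two, Complex.mul_re]
          rw [← hz, this, h0]; nlinarith
      rcases lt_or_gt_of_ne hzim with h | h
      · refine ⟨-z, ?_, by simpa using hz⟩
        show 0 < (-z).im
        simp only [Complex.neg_im]
        linarith
      · exact ⟨z, h, hz⟩
  have himT : (fun z : ℂ => z ^ 2) '' T = A := by
    have hTS : T = Neg.neg '' S := by
      ext z
      constructor
      · intro hz
        refine ⟨-z, ?_, by simp⟩
        show 0 < (-z).im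
        simp only [Complex.neg_im]
        have hz' : z.im < 0 := hz
        linarith
      · rintro ⟨w, hw, rfl⟩
        show (-w).im < 0
        simp only [Complex.neg_im]
        have hw' : 0 < w.im := hw
        linarith
    rw [hTS, Set.image_image]
    simpa using himS
  -- derivative within
  have hder : ∀ s : Set ℂ, ∀ z ∈ s, HasFDerivWithinAt (fun w : ℂ => w ^ 2)
      (((ContinuousLinearMap.smulRight (1 : ℂ →L[ℂ] ℂ) (2 * z)).restrictScalars ℝ)) s z :=
    fun s z _ => (Stmt12Aux.hasFDeriv_sq z).hasFDerivWithinAt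
  have hdet : ∀ z : ℂ,
      |(((ContinuousLinearMap.smulRight (1 : ℂ →L[ℂ] ℂ) (2 * z)).restrictScalars ℝ)).det|
      = 4 * ‖z‖ ^ 2 := by
    intro z
    rw [Stmt12Aux.det_sq, abs_of_nonneg (Complex.normSq_nonneg _)]
    have : Complex.normSq (2 * z) = 4 * Complex.normSq z := by
      simp [Complex.normSq_mul]; norm_num
    rw [this, Complex.normSq_eq_norm_sq]
  -- A is almost all of ℂ
  have hAae : A =ᵐ[volume] (Set.univ : Set ℂ) := by
    rw [Filter.eventuallyEq_set]
    have : volume {w : ℂ | w.im = 0} = 0 := Stmt12Aux.null_real_axis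
    filter_upwards [measure_eq_zero_iff_ae_notMem.mp this] with w hw
    simp only [Set.mem_univ, iff_true, hA, Set.mem_setOf_eq]
    intro ⟨h1, _⟩; exact hw h1
  have hSTae : ((S ∪ T : Set ℂ)) =ᵐ[volume] (Set.univ : Set ℂ) := by
    rw [Filter.eventuallyEq_set]
    filter_upwards [measure_eq_zero_iff_ae_notMem.mp Stmt12Aux.null_real_axis] with w hw
    simp only [Set.mem_univ, iff_true, Set.mem_union]
    rcases lt_trichotomy w.im 0 with h | h | h
    · exact Or.inr (show w.im < 0 from h)
    · exact absurd h hw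
    · exact Or.inl (show 0 < w.im from h)
  -- integrability of f
  have hintS : IntegrableOn (fun x : ℂ =>
      |(((ContinuousLinearMap.smulRight (1 : ℂ →L[ℂ] ℂ) (2 * x)).restrictScalars ℝ)).det|
        • f (x ^ 2)) S := by
    apply Integrable.integrableOn
    have : (fun x : ℂ =>
        |(((ContinuousLinearMap.smulRight (1 : ℂ →L[ℂ] ℂ) (2 * x)).restrictScalars ℝ)).det|
          • f (x ^ 2)) = fun x : ℂ => 4 * (‖x‖ ^ 2 * f (x ^ 2)) := by
      funext x; rw [hdet x]; simp [smul_eq_mul]; ring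
    rw [this]
    exact hint.const_mul 4
  have hfA : IntegrableOn f A := by
    rw [← himS]
    exact (integrableOn_image_iff_integrableOn_abs_det_fderiv_smul volume hSm (hder S)
      hinjS f).mpr hintS
  have hfInt : Integrable f := by
    have h := Measure.restrict_congr_set (μ := volume) hAae
    rw [IntegrableOn, h, Measure.restrict_univ] at hfA
    exact hfA
  refine ⟨hfInt, ?_⟩
  -- integrals on S and T
  have hIS : ∫ x in S, ‖x‖ ^ 2 * f (x ^ 2) = (1 / 4) * ∫ y, f y := by
    have h1 : ∫ y in A, f y = ∫ x in S, (4 * ‖x‖ ^ 2) * f (x ^ 2) := by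
      rw [← himS, integral_image_eq_integral_abs_det_fderiv_smul volume hSm (hder S) hinjS f]
      congr 1; funext x; rw [hdet x]; simp [smul_eq_mul]
    have h2 : ∫ y in A, f y = ∫ y, f y := by
      rw [setIntegral_congr_set hAae, Measure.restrict_univ]
    have h3 : ∫ x in S, (4 * ‖x‖ ^ 2) * f (x ^ 2) = 4 * ∫ x in S, ‖x‖ ^ 2 * f (x ^ 2) := by
      rw [← integral_const_mul]
      congr 1; funext x; ring
    rw [← h2, h1, h3]; ring
  have hIT : ∫ x in T, ‖x‖ ^ 2 * f (x ^ 2) = (1 / 4) * ∫ y, f y := by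
    have h1 : ∫ y in A, f y = ∫ x in T, (4 * ‖x‖ ^ 2) * f (x ^ 2) := by
      rw [← himT, integral_image_eq_integral_abs_det_fderiv_smul volume hTm (hder T) hinjT f]
      congr 1; funext x; rw [hdet x]; simp [smul_eq_mul]
    have h2 : ∫ y in A, f y = ∫ y, f y := by
      rw [setIntegral_congr_set hAae, Measure.restrict_univ]
    have h3 : ∫ x in T, (4 * ‖x‖ ^ 2) * f (x ^ 2) = 4 * ∫ x in T, ‖x‖ ^ 2 * f (x ^ 2) := by
      rw [← integral_const_mul]
      congr 1; funext x; ring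
    rw [← h2, h1, h3]; ring
  have hdisj : Disjoint S T := by
    rw [Set.disjoint_left]
    intro z hz hz'
    exact absurd (show z.im < 0 from hz') (asymm (show (0 : ℝ) < z.im from hz))
  have hsplit : ∫ x : ℂ, ‖x‖ ^ 2 * f (x ^ 2)
      = (∫ x in S, ‖x‖ ^ 2 * f (x ^ 2)) + ∫ x in T, ‖x‖ ^ 2 * f (x ^ 2) := by
    rw [← setIntegral_union hdisj hTm hint.integrableOn hint.integrableOn]
    rw [setIntegral_congr_set hSTae, Measure.restrict_univ]
  rw [hsplit, hIS, hIT]; ring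
end

section
/- Define the vector field 𝓕(ξ) = ( ∫_{ℝ²} |x−ξ| x₁ (1+|x|²)^{−3} dx , ∫_{ℝ²} |x−ξ| x₂ (1+|x|²)^{−3} dx ) for ξ∈ℝ². Then 𝓕 is of class C¹ on ℝ², and at every point of the form (ξ₁,0) with ξ₁∈ℝ the Jacobian matrix D𝓕(ξ₁,0) is diagonal (the mixed partial derivatives ∂_{ξ₂}𝓕₁(ξ₁,0) and ∂_{ξ₁}𝓕₂(ξ₁,0) vanish), the diagonal entry ∂_{ξ₂}𝓕₂(ξ₁,0) = −∫_{ℝ²} x₂²/( |x−(ξ₁,0)| (1+|x|²)³ ) dx is strictly negative, and det D𝓕(ξ₁,0) > 0; in particular D𝓕 is non-degenerate at every point (ξ₁,0). -/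
open MeasureTheory Filter Real Set

noncomputable section

/-- First component of the vector field `𝓕`. -/
def F1 (ξ : ℂ) : ℝ := ∫ x : ℂ, ‖x - ξ‖ * x.re * (1 / (1 + ‖x‖ ^ 2) ^ 3)

/-- Second component of the vector field `𝓕`. -/
def F2 (ξ : ℂ) : ℝ := ∫ x : ℂ, ‖x - ξ‖ * x.im * (1 / (1 + ‖x‖ ^ 2) ^ 3)


def Wt (x : ℂ) : ℝ := 1 / (1 + ‖x‖ ^ 2) ^ 3

lemma Wt_pos (x : ℂ) : 0 < Wt x := by unfold Wt; positivity

lemma Wt_cont : Continuous Wt := by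
  unfold Wt
  fun_prop (disch := intro x; positivity)

lemma cnorm (z : ℂ) : ‖z‖ = √(z.re ^ 2 + z.im ^ 2) := by
  rw [Complex.norm_def, Complex.normSq_apply]
  ring_nf

lemma master_int : Integrable (fun x : ℂ => (1 + ‖x‖) ^ 2 * Wt x) := by
  have h4 : ((Module.finrank ℝ ℂ : ℝ)) < 4 := by
    rw [Complex.finrank_real_complex]; norm_num
  refine ((integrable_one_add_norm (E := ℂ) h4).const_mul 8).mono' ?_ ?_
  · exact ((continuous_const.add continuous_norm).pow 2 |>.mul Wt_cont).aestronglyMeasurable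
  · refine Eventually.of_forall fun x => ?_
    have hn : (0:ℝ) ≤ ‖x‖ := norm_nonneg x
    have h2 : (0:ℝ) < (1 + ‖x‖ ^ 2) := by positivity
    have h3 : (0:ℝ) < (1 + ‖x‖) := by positivity
    rw [Real.norm_eq_abs, abs_of_nonneg (mul_nonneg (by positivity) (Wt_pos x).le)]
    have hr : ((1 + ‖x‖) : ℝ) ^ (-(4:ℝ)) = ((1+‖x‖)^(4:ℕ))⁻¹ := by
      rw [Real.rpow_neg h3.le, show ((4:ℝ)) = ((4:ℕ):ℝ) by norm_num, Real.rpow_natCast]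
    rw [hr, Wt, mul_one_div, ← div_eq_mul_inv, div_le_div_iff₀ (by positivity) (by positivity)]
    have h1 : ((1 + ‖x‖) ^ 2) ^ 3 ≤ (2 * (1 + ‖x‖ ^ 2)) ^ 3 := by
      apply pow_le_pow_left₀ (by positivity)
      nlinarith [sq_nonneg (1 - ‖x‖)]
    nlinarith [h1]

def dker (ξ x : ℂ) : ℂ →L[ℝ] ℝ := (-(‖x - ξ‖⁻¹)) • innerSL ℝ (x - ξ)

lemma dker_apply (ξ x : ℂ) (v : ℂ) :
    dker ξ x v = -(‖x - ξ‖⁻¹ * ((x-ξ).re * v.re + (x-ξ).im * v.im)) := by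
  have h : (inner ℝ (x - ξ) v : ℝ) = (x-ξ).re * v.re + (x-ξ).im * v.im := by
    rw [Complex.inner]
    simp [Complex.mul_re]
    ring
  simp only [dker, ContinuousLinearMap.smul_apply, innerSL_apply_apply, h, smul_eq_mul]
  ring

lemma norm_dker_le (ξ x : ℂ) : ‖dker ξ x‖ ≤ 1 := by
  refine ContinuousLinearMap.opNorm_le_bound _ zero_le_one fun v => ?_
  rw [dker, ContinuousLinearMap.smul_apply, innerSL_apply_apply, smul_eq_mul, Real.norm_eq_abs,
    abs_mul, abs_neg, abs_inv, abs_norm]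
  rcases eq_or_ne x ξ with h | h
  · simp [h]
  · have hn : (0:ℝ) < ‖x - ξ‖ := norm_pos_iff.2 (sub_ne_zero.2 h)
    calc ‖x - ξ‖⁻¹ * |(inner ℝ (x - ξ) v : ℝ)| ≤ ‖x - ξ‖⁻¹ * (‖x - ξ‖ * ‖v‖) := by
          gcongr; exact abs_real_inner_le_norm _ _
      _ = ‖v‖ := inv_mul_cancel_left₀ hn.ne' _
      _ ≤ 1 * ‖v‖ := by rw [one_mul]

lemma hasFDerivAt_norm_sub (x ξ : ℂ) (h : x ≠ ξ) :
    HasFDerivAt (fun ξ' => ‖x - ξ'‖) (dker ξ x) ξ := by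
  have hne : x - ξ ≠ 0 := sub_ne_zero.2 h
  have hn : (0:ℝ) < ‖x - ξ‖ := norm_pos_iff.2 hne
  have h1 : HasFDerivAt (fun y : ℂ => ‖y‖) (‖x - ξ‖⁻¹ • innerSL ℝ (x - ξ)) (x - ξ) := by
    have hsq : HasFDerivAt (fun y : ℂ => ‖y‖ ^ 2) (2 • innerSL ℝ (x - ξ)) (x - ξ) := by
      simpa using (hasFDerivAt_id (x - ξ)).norm_sq
    have hs := hsq.sqrt (by positivity)
    have hfun : (fun y : ℂ => √(‖y‖ ^ 2)) = fun y : ℂ => ‖y‖ := by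
      funext y; rw [Real.sqrt_sq (norm_nonneg y)]
    rw [hfun] at hs
    convert hs using 1
    · rfl
    ext v
    rw [Real.sqrt_sq (norm_nonneg _)]
    simp only [ContinuousLinearMap.smul_apply, innerSL_apply_apply, smul_eq_mul, two_smul,
      ContinuousLinearMap.add_apply]
    field_simp
    ring
  have h2 : HasFDerivAt (fun ξ' : ℂ => x - ξ') (-(ContinuousLinearMap.id ℝ ℂ)) ξ := by
    simpa using (hasFDerivAt_id (𝕜 := ℝ) ξ).const_sub x
  have h3 := h1.comp ξ h2
  have heq : (‖x - ξ‖⁻¹ • innerSL ℝ (x - ξ)).comp (-(ContinuousLinearMap.id ℝ ℂ))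
      = dker ξ x := by
    ext v
    simp only [ContinuousLinearMap.coe_comp', Function.comp_apply,
      ContinuousLinearMap.neg_apply, ContinuousLinearMap.coe_id', id_eq,
      ContinuousLinearMap.smul_apply, innerSL_apply_apply, smul_eq_mul, dker, inner_neg_right]
    ring
  rw [heq] at h3
  exact h3


def FF (L : ℂ →L[ℝ] ℝ) (ξ : ℂ) : ℝ := ∫ x : ℂ, ‖x - ξ‖ * L x * Wt x

def FF' (L : ℂ →L[ℝ] ℝ) (ξ x : ℂ) : ℂ →L[ℝ] ℝ := (L x * Wt x) • dker ξ x

lemma ae_ne (ξ : ℂ) : ∀ᵐ x : ℂ, x ≠ ξ := by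
  rw [ae_iff]
  simpa [ne_eq, not_not, Set.setOf_eq_eq_singleton] using measure_singleton (α := ℂ) ξ

lemma dker_meas (ξ : ℂ) : AEStronglyMeasurable (fun x => dker ξ x) (volume : Measure ℂ) := by
  unfold dker
  exact AEStronglyMeasurable.smul
    ((measurable_norm.comp (measurable_id.sub measurable_const)).inv.neg).aestronglyMeasurable
    (((innerSL ℝ (E := ℂ)).continuous.comp (continuous_id.sub continuous_const)).aestronglyMeasurable)

lemma FF'_meas (L : ℂ →L[ℝ] ℝ) (ξ : ℂ) :
    AEStronglyMeasurable (FF' L ξ) (volume : Measure ℂ) := by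
  unfold FF'
  exact AEStronglyMeasurable.smul
    ((L.continuous.mul Wt_cont).aestronglyMeasurable) (dker_meas ξ)

lemma norm_FF'_le (L : ℂ →L[ℝ] ℝ) (hL : ‖L‖ ≤ 1) (ξ x : ℂ) :
    ‖FF' L ξ x‖ ≤ ‖x‖ * Wt x := by
  rw [FF', norm_smul (L x * Wt x) (dker ξ x), Real.norm_eq_abs, abs_mul, abs_of_pos (Wt_pos x)]
  calc |L x| * Wt x * ‖dker ξ x‖ ≤ (1 * ‖x‖) * Wt x * 1 := by
        refine mul_le_mul (mul_le_mul_of_nonneg_right ?_ (Wt_pos x).le) (norm_dker_le ξ x)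
          (norm_nonneg _) (mul_nonneg (by positivity) (Wt_pos x).le)
        calc |L x| ≤ ‖L‖ * ‖x‖ := L.le_opNorm x
          _ ≤ 1 * ‖x‖ := by gcongr
    _ = ‖x‖ * Wt x := by ring

lemma bound_int : Integrable (fun x : ℂ => ‖x‖ * Wt x) := by
  refine master_int.mono' ((continuous_norm.mul Wt_cont).aestronglyMeasurable)
    (Eventually.of_forall fun x => ?_)
  rw [Real.norm_eq_abs, abs_of_nonneg (mul_nonneg (norm_nonneg x) (Wt_pos x).le)]
  have : ‖x‖ ≤ (1 + ‖x‖)^2 := by nlinarith [norm_nonneg x, sq_nonneg ‖x‖]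
  exact mul_le_mul_of_nonneg_right this (Wt_pos x).le

lemma FF_int (L : ℂ →L[ℝ] ℝ) (hL : ‖L‖ ≤ 1) (ξ : ℂ) :
    Integrable (fun x : ℂ => ‖x - ξ‖ * L x * Wt x) := by
  refine (master_int.const_mul (1 + ‖ξ‖)).mono'
    ((((continuous_id.sub continuous_const).norm.mul L.continuous).mul Wt_cont).aestronglyMeasurable)
    (Eventually.of_forall fun x => ?_)
  rw [Real.norm_eq_abs, abs_mul, abs_mul, abs_norm, abs_of_pos (Wt_pos x)]
  have h1 : ‖x - ξ‖ ≤ ‖x‖ + ‖ξ‖ := norm_sub_le x ξ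
  have h2 : |L x| ≤ ‖x‖ := by
    calc |L x| ≤ ‖L‖ * ‖x‖ := L.le_opNorm x
      _ ≤ 1 * ‖x‖ := by gcongr
      _ = ‖x‖ := one_mul _
  have h3 : (‖x‖ + ‖ξ‖) * ‖x‖ ≤ (1 + ‖ξ‖) * (1 + ‖x‖)^2 := by
    nlinarith [norm_nonneg x, norm_nonneg ξ, sq_nonneg ‖x‖]
  calc ‖x - ξ‖ * |L x| * Wt x ≤ ((‖x‖ + ‖ξ‖) * ‖x‖) * Wt x := by
        refine mul_le_mul_of_nonneg_right ?_ (Wt_pos x).le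
        exact mul_le_mul h1 h2 (abs_nonneg _) (by positivity)
    _ ≤ ((1 + ‖ξ‖) * (1 + ‖x‖)^2) * Wt x := mul_le_mul_of_nonneg_right h3 (Wt_pos x).le
    _ = (1 + ‖ξ‖) * ((1 + ‖x‖)^2 * Wt x) := by ring

/-- Main differentiation under the integral sign. -/
lemma key (L : ℂ →L[ℝ] ℝ) (hL : ‖L‖ ≤ 1) (ξ₀ : ℂ) :
    Integrable (FF' L ξ₀) ∧ HasFDerivAt (FF L) (∫ x : ℂ, FF' L ξ₀ x) ξ₀ := by
  have := hasFDerivAt_integral_of_dominated_loc_of_lip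
    (F := fun (ξ : ℂ) (x : ℂ) => ‖x - ξ‖ * L x * Wt x) (F' := FF' L ξ₀)
    (bound := fun x => ‖x‖ * Wt x) (μ := volume) (x₀ := ξ₀) (Metric.ball_mem_nhds ξ₀ one_pos)
    (Eventually.of_forall fun ξ => (FF_int L hL ξ).aestronglyMeasurable)
    (FF_int L hL ξ₀) (FF'_meas L ξ₀)
    ?_ bound_int ?_
  · exact this
  · refine Eventually.of_forall fun x => ?_
    refine LipschitzWith.lipschitzOnWith (LipschitzWith.of_dist_le_mul fun ξ ξ' => ?_)
    rw [Real.dist_eq]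
    have h1 : ‖x - ξ‖ * L x * Wt x - ‖x - ξ'‖ * L x * Wt x
        = (‖x - ξ‖ - ‖x - ξ'‖) * (L x * Wt x) := by ring
    rw [h1, abs_mul]
    have h2 : |‖x - ξ‖ - ‖x - ξ'‖| ≤ dist ξ ξ' := by
      rw [dist_comm, dist_eq_norm]
      calc |‖x - ξ‖ - ‖x - ξ'‖| ≤ ‖(x - ξ) - (x - ξ')‖ := abs_norm_sub_norm_le _ _
        _ = ‖ξ' - ξ‖ := by congr 1; ring
    have h3 : |L x * Wt x| ≤ ((Real.nnabs (‖x‖ * Wt x)) : ℝ) := by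
      rw [Real.coe_nnabs, abs_of_nonneg (mul_nonneg (norm_nonneg x) (Wt_pos x).le),
        abs_mul, abs_of_pos (Wt_pos x)]
      refine mul_le_mul_of_nonneg_right ?_ (Wt_pos x).le
      calc |L x| ≤ ‖L‖ * ‖x‖ := L.le_opNorm x
        _ ≤ 1 * ‖x‖ := by gcongr
        _ = ‖x‖ := one_mul _
    calc |‖x - ξ‖ - ‖x - ξ'‖| * |L x * Wt x|
        ≤ dist ξ ξ' * ((Real.nnabs (‖x‖ * Wt x)) : ℝ) :=
          mul_le_mul h2 h3 (abs_nonneg _) dist_nonneg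
      _ = ((Real.nnabs (‖x‖ * Wt x)) : ℝ) * dist ξ ξ' := mul_comm _ _
  · refine (ae_ne ξ₀).mono fun x hx => ?_
    have := (hasFDerivAt_norm_sub x ξ₀ hx).mul_const (L x * Wt x)
    have hfun : (fun ξ => ‖x - ξ‖ * (L x * Wt x)) = fun ξ => ‖x - ξ‖ * L x * Wt x := by
      funext ξ; ring
    rw [hfun] at this
    exact this


lemma fderiv_FF (L : ℂ →L[ℝ] ℝ) (hL : ‖L‖ ≤ 1) (ξ : ℂ) :
    fderiv ℝ (FF L) ξ = ∫ x : ℂ, FF' L ξ x := (key L hL ξ).2.fderiv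

lemma fderiv_FF_apply (L : ℂ →L[ℝ] ℝ) (hL : ‖L‖ ≤ 1) (ξ v : ℂ) :
    fderiv ℝ (FF L) ξ v = ∫ x : ℂ, FF' L ξ x v := by
  rw [fderiv_FF L hL ξ]
  exact ContinuousLinearMap.integral_apply (key L hL ξ).1 v

lemma contDiff_FF (L : ℂ →L[ℝ] ℝ) (hL : ‖L‖ ≤ 1) : ContDiff ℝ 1 (FF L) := by
  rw [contDiff_one_iff_fderiv]
  refine ⟨fun ξ => ((key L hL ξ).2).differentiableAt, ?_⟩
  have hfd : (fderiv ℝ (FF L)) = fun ξ => ∫ x : ℂ, FF' L ξ x := by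
    funext ξ; exact fderiv_FF L hL ξ
  rw [hfd, continuous_iff_continuousAt]
  intro ξ₀
  refine continuousAt_of_dominated (bound := fun x => ‖x‖ * Wt x)
    (Eventually.of_forall fun ξ => FF'_meas L ξ)
    (Eventually.of_forall fun ξ => Eventually.of_forall fun x => norm_FF'_le L hL ξ x)
    bound_int ?_
  refine (ae_ne ξ₀).mono fun x hx => ?_
  have h1 : ContinuousAt (fun ξ => dker ξ x) ξ₀ := by
    unfold dker
    refine ContinuousAt.fun_smul ?_ ?_
    · exact (((continuous_const.sub continuous_id).norm.continuousAt).inv₀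
        (norm_ne_zero_iff.2 (sub_ne_zero.2 hx))).neg
    · exact ((innerSL ℝ (E := ℂ)).continuous.comp (continuous_const.sub continuous_id)).continuousAt
  exact ContinuousAt.fun_smul continuousAt_const h1

lemma phi_lt {c u v : ℝ} (hc : 0 < c) (h : u < v) :
    u / √(u^2 + c) < v / √(v^2 + c) := by
  have hu : (0:ℝ) < √(u^2 + c) := Real.sqrt_pos.2 (by positivity)
  have hv : (0:ℝ) < √(v^2 + c) := Real.sqrt_pos.2 (by positivity)
  rw [div_lt_div_iff₀ hu hv]
  have squ : √(u^2+c) ^ 2 = u^2 + c := Real.sq_sqrt (by positivity)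
  have sqv : √(v^2+c) ^ 2 = v^2 + c := Real.sq_sqrt (by positivity)
  rcases le_or_gt 0 u with hu0 | hu0
  · -- 0 ≤ u < v
    have hv0 : 0 < v := lt_of_le_of_lt hu0 h
    refine lt_of_pow_lt_pow_left₀ 2 (by positivity) ?_
    rw [mul_pow, mul_pow, squ, sqv]
    have h2 : u^2 < v^2 := by nlinarith
    nlinarith [mul_lt_mul_of_pos_right h2 hc]
  · rcases le_or_gt v 0 with hv0 | hv0
    · -- u < v ≤ 0
      have key : (-v) * √(u^2+c) < (-u) * √(v^2+c) := by
        refine lt_of_pow_lt_pow_left₀ 2 (mul_nonneg (by linarith) hv.le) ?_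
        rw [mul_pow, mul_pow, squ, sqv]
        have h2 : v^2 < u^2 := by nlinarith
        nlinarith [mul_lt_mul_of_pos_right h2 hc]
      rw [neg_mul, neg_mul] at key
      linarith
    · -- u < 0 < v
      have h1 : u * √(v^2+c) < 0 := mul_neg_of_neg_of_pos hu0 hv
      have h2 : 0 < v * √(u^2+c) := mul_pos hv0 hu
      linarith

lemma phi_le {c u v : ℝ} (hc : 0 < c) (h : u ≤ v) :
    u / √(u^2 + c) ≤ v / √(v^2 + c) := by
  rcases eq_or_lt_of_le h with rfl | h
  · exact le_refl _
  · exact (phi_lt hc h).le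

lemma phi_neg (c u : ℝ) : (-u) / √((-u)^2 + c) = -(u / √(u^2 + c)) := by
  rw [neg_sq, neg_div]

lemma core_nonneg {a s b : ℝ} (hb : b ≠ 0) :
    0 ≤ a * ((a - s)/√((a-s)^2 + b^2) + (a+s)/√((a+s)^2 + b^2)) := by
  have hc : (0:ℝ) < b^2 := by positivity
  rcases le_or_gt 0 a with ha | ha
  · refine mul_nonneg ha ?_
    have h := phi_le hc (show -(a+s) ≤ a - s by linarith)
    rw [phi_neg] at h
    linarith
  · have h := phi_le hc (show a + s ≤ -(a - s) by linarith)
    rw [phi_neg] at h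
    nlinarith
lemma core_pos {a s b : ℝ} (hb : b ≠ 0) (ha : 0 < a) :
    0 < a * ((a - s)/√((a-s)^2 + b^2) + (a+s)/√((a+s)^2 + b^2)) := by
  have hc : (0:ℝ) < b^2 := by positivity
  have h := phi_lt hc (show -(a+s) < a - s by linarith)
  rw [phi_neg] at h
  nlinarith

lemma null_im : (volume : Measure ℂ) {x : ℂ | x.im = 0} = 0 := by
  have h : {x : ℂ | x.im = 0} = (LinearMap.ker Complex.imLm : Submodule ℝ ℂ) := by
    ext z
    simp [LinearMap.mem_ker, Complex.imLm]
  rw [h]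
  refine Measure.addHaar_submodule _ _ fun htop => ?_
  have := Submodule.eq_top_iff'.1 htop Complex.I
  simp [LinearMap.mem_ker, Complex.imLm] at this

lemma integral_conj_odd (f : ℂ → ℝ) (hf : ∀ x, f ((starRingEnd ℂ) x) = -f x) :
    ∫ x : ℂ, f x = 0 := by
  have h := MeasureTheory.integral_comp Complex.conjLIE f
  simp only [Complex.conjLIE_apply, hf, integral_neg] at h
  linarith

/-! ### Evaluation of the derivative at real points -/

lemma FF'_apply_one (L : ℂ →L[ℝ] ℝ) (t : ℝ) (x : ℂ) :
    FF' L (t:ℂ) x 1 = -(L x * Wt x * (‖x - (t:ℂ)‖⁻¹ * (x.re - t))) := by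
  rw [FF', ContinuousLinearMap.smul_apply, dker_apply]
  simp only [Complex.sub_re, Complex.ofReal_re, Complex.sub_im, Complex.ofReal_im,
    Complex.one_re, Complex.one_im, smul_eq_mul, sub_zero, mul_one, mul_zero, add_zero]
  ring

lemma FF'_apply_I (L : ℂ →L[ℝ] ℝ) (t : ℝ) (x : ℂ) :
    FF' L (t:ℂ) x Complex.I = -(L x * Wt x * (‖x - (t:ℂ)‖⁻¹ * x.im)) := by
  rw [FF', ContinuousLinearMap.smul_apply, dker_apply]
  simp only [Complex.sub_re, Complex.ofReal_re, Complex.sub_im, Complex.ofReal_im,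
    Complex.I_re, Complex.I_im, smul_eq_mul, sub_zero, mul_one, mul_zero, zero_add]
  ring

lemma Wt_conj (x : ℂ) : Wt ((starRingEnd ℂ) x) = Wt x := by
  simp [Wt]

lemma norm_conj_sub_real (t : ℝ) (x : ℂ) :
    ‖(starRingEnd ℂ) x - (t:ℂ)‖ = ‖x - (t:ℂ)‖ := by
  have h : (starRingEnd ℂ) x - (t:ℂ) = (starRingEnd ℂ) (x - (t:ℂ)) := by
    rw [map_sub, Complex.conj_ofReal]
  rw [h, Complex.norm_conj]

lemma int_FF'_re_I (t : ℝ) : (∫ x : ℂ, FF' Complex.reCLM (t:ℂ) x Complex.I) = 0 := by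
  apply integral_conj_odd
  intro x
  rw [FF'_apply_I, FF'_apply_I]
  simp only [Complex.reCLM_apply, Complex.conj_re, Complex.conj_im, Wt_conj,
    norm_conj_sub_real]
  ring

lemma int_FF'_im_one (t : ℝ) : (∫ x : ℂ, FF' Complex.imCLM (t:ℂ) x 1) = 0 := by
  apply integral_conj_odd
  intro x
  rw [FF'_apply_one, FF'_apply_one]
  simp only [Complex.imCLM_apply, Complex.conj_re, Complex.conj_im, Wt_conj,
    norm_conj_sub_real]
  ring

lemma ae_im_ne : ∀ᵐ x : ℂ, x.im ≠ 0 := by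
  rw [ae_iff]
  simpa only [ne_eq, not_not] using null_im

lemma integrable_eval (L : ℂ →L[ℝ] ℝ) (hL : ‖L‖ ≤ 1) (t : ℝ) (v : ℂ) :
    Integrable (fun x : ℂ => FF' L (t:ℂ) x v) := by
  exact (ContinuousLinearMap.apply ℝ ℝ v).integrable_comp (key L hL (t:ℂ)).1

lemma int_FF'_im_I (t : ℝ) :
    (∫ x : ℂ, FF' Complex.imCLM (t:ℂ) x Complex.I)
      = -∫ x : ℂ, x.im ^ 2 / (‖x - (t:ℂ)‖ * (1 + ‖x‖ ^ 2) ^ 3) := by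
  rw [← integral_neg]
  refine integral_congr_ae (Eventually.of_forall fun x => ?_)
  simp only [Pi.neg_apply, FF'_apply_I, Complex.imCLM_apply, Wt]
  simp only [div_eq_mul_inv, mul_inv_rev]
  ring

lemma pos_B2 (t : ℝ) : 0 < ∫ x : ℂ, x.im ^ 2 / (‖x - (t:ℂ)‖ * (1 + ‖x‖ ^ 2) ^ 3) := by
  have hint : Integrable (fun x : ℂ => x.im ^ 2 / (‖x - (t:ℂ)‖ * (1 + ‖x‖ ^ 2) ^ 3)) := by
    refine ((integrable_eval Complex.imCLM (le_of_eq Complex.imCLM_norm) t Complex.I).neg).congr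
      (Eventually.of_forall fun x => ?_)
    simp only [Pi.neg_apply, FF'_apply_I, neg_neg, Complex.imCLM_apply, Wt]
    simp only [div_eq_mul_inv, mul_inv_rev]
    ring
  refine (integral_pos_iff_support_of_nonneg_ae (Eventually.of_forall fun x => ?_) hint).2 ?_
  · exact div_nonneg (sq_nonneg _) (by positivity)
  · refine lt_of_lt_of_le (b := volume {x : ℂ | 0 < x.im}) ?_ (measure_mono ?_)
    · exact (isOpen_lt continuous_const Complex.continuous_im).measure_pos volume
        ⟨Complex.I, by simp⟩
    · intro x hx
      have him : (0:ℝ) < x.im := hx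
      have hxne : x ≠ (t:ℂ) := by
        intro h; rw [h] at him; simp at him
      have hnorm : (0:ℝ) < ‖x - (t:ℂ)‖ := norm_pos_iff.2 (sub_ne_zero.2 hxne)
      have : 0 < x.im ^ 2 / (‖x - (t:ℂ)‖ * (1 + ‖x‖ ^ 2) ^ 3) := by positivity
      exact ne_of_gt this

lemma pos_A1 (t : ℝ) :
    0 < ∫ x : ℂ, x.re * Wt x * (‖x - (t:ℂ)‖⁻¹ * (x.re - t)) := by
  set q : ℂ → ℝ := fun x => x.re * Wt x * (‖x - (t:ℂ)‖⁻¹ * (x.re - t)) with hq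
  have hqint : Integrable q := by
    refine ((integrable_eval Complex.reCLM (le_of_eq Complex.reCLM_norm) t 1).neg).congr
      (Eventually.of_forall fun x => ?_)
    simp only [Pi.neg_apply, FF'_apply_one, neg_neg, Complex.reCLM_apply, hq]
  set σ : ℂ ≃ₗᵢ[ℝ] ℂ := Complex.conjLIE.trans (LinearIsometryEquiv.neg ℝ) with hσdef
  have hσx : ∀ x : ℂ, σ x = -((starRingEnd ℂ) x) := fun x => rfl
  have hσint : Integrable (fun x => q (σ x)) := (MeasureTheory.integrable_comp σ q).2 hqint
  have hσeq : ∫ x : ℂ, q (σ x) = ∫ x : ℂ, q x := MeasureTheory.integral_comp σ q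
  -- the symmetrized integrand
  have hpt : ∀ x : ℂ, x.im ≠ 0 → q x + q (σ x) =
      (x.re * ((x.re - t)/√((x.re - t)^2 + x.im^2) + (x.re + t)/√((x.re + t)^2 + x.im^2)))
        * Wt x := by
    intro x hx
    have hWt : Wt (σ x) = Wt x := by
      simp [Wt, σ.norm_map]
    have hre : (σ x).re = -x.re := by rw [hσx]; simp
    have hnorm1 : ‖x - (t:ℂ)‖ = √((x.re - t)^2 + x.im^2) := by
      rw [cnorm]
      simp [Complex.sub_re, Complex.sub_im]
    have hnorm2 : ‖σ x - (t:ℂ)‖ = √((x.re + t)^2 + x.im^2) := by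
      rw [cnorm, hσx]
      simp only [Complex.sub_re, Complex.sub_im, Complex.neg_re, Complex.neg_im,
        Complex.conj_re, Complex.conj_im, Complex.ofReal_re, Complex.ofReal_im, neg_neg, sub_zero]
      congr 1
      ring
    rw [hq]
    simp only []
    rw [hWt, hre, hnorm1, hnorm2]
    rw [div_eq_mul_inv, div_eq_mul_inv]
    ring
  have hsum : 0 < ∫ x : ℂ, (q x + q (σ x)) := by
    refine (integral_pos_iff_support_of_nonneg_ae ?_ (hqint.add hσint)).2 ?_
    · filter_upwards [ae_im_ne] with x hx
      rw [Pi.zero_apply, Pi.add_apply, hpt x hx]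
      exact mul_nonneg (core_nonneg hx) (Wt_pos x).le
    · refine lt_of_lt_of_le (b := volume ({x : ℂ | 0 < x.re} ∩ {x : ℂ | 0 < x.im})) ?_
        (measure_mono ?_)
      · refine ((isOpen_lt continuous_const Complex.continuous_re).inter
          (isOpen_lt continuous_const Complex.continuous_im)).measure_pos volume ?_
        exact ⟨1 + Complex.I, by constructor <;> simp⟩
      · rintro x ⟨hre, him⟩
        have him' : x.im ≠ 0 := ne_of_gt him
        have : 0 < q x + q (σ x) := by
          rw [hpt x him']
          exact mul_pos (core_pos him' hre) (Wt_pos x)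
        simp only [Function.mem_support, Pi.add_apply]
        exact ne_of_gt this
  have h2 : ∫ x : ℂ, (q x + q (σ x)) = 2 * ∫ x : ℂ, q x := by
    rw [integral_add hqint hσint, hσeq]; ring
  rw [h2] at hsum
  linarith

lemma hF1 : F1 = FF Complex.reCLM := by
  funext ξ
  simp only [F1, FF, Complex.reCLM_apply, Wt]

lemma hF2 : F2 = FF Complex.imCLM := by
  funext ξ
  simp only [F2, FF, Complex.imCLM_apply, Wt]

lemma hre1 : ‖(Complex.reCLM : ℂ →L[ℝ] ℝ)‖ ≤ 1 := le_of_eq Complex.reCLM_norm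
lemma him1 : ‖(Complex.imCLM : ℂ →L[ℝ] ℝ)‖ ≤ 1 := le_of_eq Complex.imCLM_norm

lemma fderiv_F1_I (t : ℝ) : fderiv ℝ F1 (t:ℂ) Complex.I = 0 := by
  rw [hF1, fderiv_FF_apply Complex.reCLM hre1 (t:ℂ) Complex.I, int_FF'_re_I]

lemma fderiv_F2_one (t : ℝ) : fderiv ℝ F2 (t:ℂ) 1 = 0 := by
  rw [hF2, fderiv_FF_apply Complex.imCLM him1 (t:ℂ) 1, int_FF'_im_one]

lemma fderiv_F2_I (t : ℝ) : fderiv ℝ F2 (t:ℂ) Complex.I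
    = -∫ x : ℂ, x.im ^ 2 / (‖x - (t:ℂ)‖ * (1 + ‖x‖ ^ 2) ^ 3) := by
  rw [hF2, fderiv_FF_apply Complex.imCLM him1 (t:ℂ) Complex.I, int_FF'_im_I]

lemma fderiv_F2_I_neg (t : ℝ) : fderiv ℝ F2 (t:ℂ) Complex.I < 0 := by
  rw [fderiv_F2_I t]
  exact neg_lt_zero.2 (pos_B2 t)

lemma fderiv_F1_one_neg (t : ℝ) : fderiv ℝ F1 (t:ℂ) 1 < 0 := by
  rw [hF1, fderiv_FF_apply Complex.reCLM hre1 (t:ℂ) 1]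
  have e : (∫ x : ℂ, FF' Complex.reCLM (t:ℂ) x 1)
      = -∫ x : ℂ, x.re * Wt x * (‖x - (t:ℂ)‖⁻¹ * (x.re - t)) := by
    rw [← integral_neg]
    refine integral_congr_ae (Eventually.of_forall fun x => ?_)
    show FF' Complex.reCLM (t:ℂ) x 1 = -(x.re * Wt x * (‖x - (t:ℂ)‖⁻¹ * (x.re - t)))
    rw [FF'_apply_one]
    simp only [Complex.reCLM_apply]
  rw [e]
  exact neg_lt_zero.2 (pos_A1 t)

/-- `𝓕 = (F₁, F₂)` is `C¹` and its Jacobian at points `(ξ₁, 0)`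
is diagonal, with `∂_{ξ₂}𝓕₂(ξ₁,0) < 0` given by the stated integral, and
positive determinant; in particular it is non-degenerate there. -/
theorem stmt_15 :
    ContDiff ℝ 1 (fun ξ : ℂ => (F1 ξ, F2 ξ)) ∧
    ∀ t : ℝ,
      fderiv ℝ F1 (t : ℂ) Complex.I = 0 ∧
      fderiv ℝ F2 (t : ℂ) 1 = 0 ∧
      fderiv ℝ F2 (t : ℂ) Complex.I =
        -∫ x : ℂ, x.im ^ 2 / (‖x - (t : ℂ)‖ * (1 + ‖x‖ ^ 2) ^ 3) ∧
      fderiv ℝ F2 (t : ℂ) Complex.I < 0 ∧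
      0 < fderiv ℝ F1 (t : ℂ) 1 * fderiv ℝ F2 (t : ℂ) Complex.I -
          fderiv ℝ F1 (t : ℂ) Complex.I * fderiv ℝ F2 (t : ℂ) 1 := by
  constructor
  · have h1 : ContDiff ℝ 1 F1 := hF1 ▸ contDiff_FF Complex.reCLM hre1
    have h2 : ContDiff ℝ 1 F2 := hF2 ▸ contDiff_FF Complex.imCLM him1
    exact h1.prodMk h2
  · intro t
    refine ⟨fderiv_F1_I t, fderiv_F2_one t, fderiv_F2_I t, fderiv_F2_I_neg t, ?_⟩
    rw [fderiv_F1_I t, fderiv_F2_one t]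
    simp only [mul_zero, zero_mul, sub_zero]
    exact mul_pos_of_neg_of_neg (fderiv_F1_one_neg t) (fderiv_F2_I_neg t)
end
end

section
/- For λ>0 and b∈ℂ let e^{W_{λ,b}(x)} = λ/(λ/32 + |x²−b|²)². Then for every s∈{0,1,2,3}, every p≥1 and every M>0 there exists C>0 such that for all λ∈(0,1] and all b∈ℂ with |b|≤M√λ one has ( ∫_{B₁} |x|^{(2+s)p} e^{p W_{λ,b}(x)} dx )^{1/p} ≤ C λ^{s/4} λ^{−(p−1)/(2p)}. -/
open MeasureTheory Filter Real Set

noncomputable section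

lemma aux_add_rpow_le {x y z : ℝ} (hx : 0 ≤ x) (hy : 0 ≤ y) (hz0 : 0 ≤ z) (hz1 : z ≤ 1) :
    (x + y) ^ z ≤ x ^ z + y ^ z := by
  have h := NNReal.rpow_add_le_add_rpow (⟨x, hx⟩ : NNReal) (⟨y, hy⟩ : NNReal) hz0 hz1
  have h2 := NNReal.coe_le_coe.2 h
  push_cast [NNReal.coe_rpow] at h2
  exact h2

lemma aux_key {α r0 : ℝ} (hr : 0 < r0) (x : ℂ) :
    (1 + ‖r0⁻¹ • x‖) ^ α = (r0 ^ α)⁻¹ * (r0 + ‖x‖) ^ α := by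
  have hn : ‖r0⁻¹ • x‖ = r0⁻¹ * ‖x‖ := by
    rw [norm_smul, Real.norm_eq_abs, abs_of_pos (by positivity)]
  have h1 : 1 + r0⁻¹ * ‖x‖ = r0⁻¹ * (r0 + ‖x‖) := by field_simp
  rw [hn, h1, Real.mul_rpow (by positivity) (by positivity), Real.inv_rpow hr.le]

lemma aux_integrable_shift {α : ℝ} (hα : α ≤ -3) {r0 : ℝ} (hr : 0 < r0) :
    Integrable (fun x : ℂ => (r0 + ‖x‖) ^ α) := by
  have hd : ((Module.finrank ℝ ℂ : ℝ)) < -α := by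
    simp [Complex.finrank_real_complex]; linarith
  have h := integrable_one_add_norm (E := ℂ) (μ := volume) hd
  have h2 : Integrable (fun x : ℂ => (1 + ‖r0⁻¹ • x‖) ^ (-(-α))) := by
    rw [integrable_comp_smul_iff volume (fun y : ℂ => (1 + ‖y‖) ^ (-(-α)))
      (by positivity : r0⁻¹ ≠ 0)]
    exact h
  simp only [neg_neg] at h2
  have h3 := h2.const_mul (r0 ^ α)
  refine h3.congr ?_
  filter_upwards with x
  rw [aux_key hr x]
  field_simp

lemma aux_integral_shift {α : ℝ} (r0 : ℝ) (hr : 0 < r0) :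
    (∫ x : ℂ, (r0 + ‖x‖) ^ α) = r0 ^ (α + 2) * ∫ x : ℂ, (1 + ‖x‖) ^ α := by
  have h := Measure.integral_comp_inv_smul (volume : Measure ℂ)
    (fun y : ℂ => (1 + ‖y‖) ^ α) r0
  simp only [Complex.finrank_real_complex, smul_eq_mul] at h
  have h2 : ∀ x : ℂ, (1 + ‖r0⁻¹ • x‖) ^ α = (r0 ^ α)⁻¹ * (r0 + ‖x‖) ^ α :=
    fun x => aux_key hr x
  rw [integral_congr_ae (Eventually.of_forall h2), integral_const_mul] at h
  have hne : (r0 ^ α) ≠ 0 := (Real.rpow_pos_of_pos hr α).ne'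
  have habs : |r0 ^ (2:ℕ)| = r0 ^ (2:ℕ) := abs_of_pos (by positivity)
  rw [habs] at h
  have : (∫ x : ℂ, (r0 + ‖x‖) ^ α) = r0 ^ α * (r0 ^ (2:ℕ) * ∫ x : ℂ, (1 + ‖x‖) ^ α) := by
    rw [← h]; field_simp
  rw [this, Real.rpow_add hr, ← Real.rpow_natCast r0 2]
  push_cast
  ring

lemma aux_sqrt_rpow {a : ℝ} (ha : 0 ≤ a) (c : ℝ) : Real.sqrt a ^ c = a ^ (c / 2) := by
  rw [Real.sqrt_eq_rpow, ← Real.rpow_mul ha]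
  congr 1; ring

/-- The open unit ball in `ℝ² ≅ ℂ` centered at the origin. -/
def B1 : Set ℂ := Metric.ball 0 1

set_option maxHeartbeats 1000000 in
/-- `L^p` estimates for the bubble
`e^{W_{λ,b}(x)} = λ/(λ/32 + |x²-b|²)²`. -/
theorem stmt_17 (s : ℕ) (hs : s ≤ 3) (p : ℝ) (hp : 1 ≤ p) (M : ℝ) (hM : 0 < M) :
    ∃ C : ℝ, 0 < C ∧ ∀ lam : ℝ, 0 < lam → lam ≤ 1 → ∀ b : ℂ, ‖b‖ ≤ M * Real.sqrt lam →
      (∫ x in B1, ‖x‖ ^ (((2 : ℝ) + s) * p) *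
          (lam / (lam / 32 + ‖x ^ 2 - b‖ ^ 2) ^ 2) ^ p) ^ (1 / p) ≤
        C * lam ^ ((s : ℝ) / 4) * lam ^ (-(p - 1) / (2 * p)) := by
  have hp0 : (0:ℝ) < p := lt_of_lt_of_le one_pos hp
  have hs3 : (s:ℝ) ≤ 3 := by exact_mod_cast hs
  have hsnn : (0:ℝ) ≤ (s:ℝ) := Nat.cast_nonneg s
  set α : ℝ := ((s:ℝ) - 6) * p with hαdef
  have hα3 : α ≤ -3 := by nlinarith
  have hα0 : α ≤ 0 := by linarith
  set R : ℝ := 2 * M + 2 with hRdef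
  have hR2 : (2:ℝ) ≤ R := by simp only [hRdef]; linarith
  have hR0 : (0:ℝ) < R := by linarith
  set Cα : ℝ := ∫ x : ℂ, (1 + ‖x‖) ^ α with hCadef
  have hCα0 : 0 ≤ Cα :=
    integral_nonneg fun x => Real.rpow_nonneg (by positivity) _
  have hπ := Real.pi_pos
  set C1 : ℝ := 1024 * R ^ (((2:ℝ) + s) / 2) * (π * R + 1) with hC1def
  set C2 : ℝ := 1024 * (Cα + 1) with hC2def
  have hC1pos : 0 < C1 := by
    have := Real.rpow_pos_of_pos hR0 (((2:ℝ) + s) / 2)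
    have : 0 < π * R + 1 := by nlinarith
    simp only [hC1def]
    positivity
  have hC2pos : 0 < C2 := by simp only [hC2def]; positivity
  refine ⟨C1 + C2, by positivity, ?_⟩
  intro lam hl0 hl1 b hb
  set w : ℝ := -(p - 1) / (2 * p) with hwdef
  have hsl : 0 < Real.sqrt lam := Real.sqrt_pos.2 hl0
  set r0 : ℝ := Real.sqrt (R * Real.sqrt lam) with hr0def
  have hRs0 : 0 < R * Real.sqrt lam := mul_pos hR0 hsl
  have hr0 : 0 < r0 := Real.sqrt_pos.2 hRs0
  have hr0sq : r0 ^ (2:ℕ) = R * Real.sqrt lam := Real.sq_sqrt hRs0.le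
  set e : ℝ := ((2:ℝ) + s) * p with hedef
  have he0 : (0:ℝ) ≤ e := by
    have : (0:ℝ) < 2 + s := by linarith
    positivity
  set F : ℂ → ℝ := fun x => ‖x‖ ^ e * (lam / (lam / 32 + ‖x ^ 2 - b‖ ^ 2) ^ 2) ^ p
    with hFdef
  have hden : ∀ x : ℂ, 0 < lam / 32 + ‖x ^ 2 - b‖ ^ 2 := fun x => by
    have : (0:ℝ) < lam / 32 := by linarith
    positivity
  have hF0 : ∀ x, 0 ≤ F x := fun x =>
    mul_nonneg (Real.rpow_nonneg (norm_nonneg x) e)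
      (Real.rpow_nonneg (div_nonneg hl0.le (by positivity)) p)
  have hFcont : Continuous F := by
    apply Continuous.mul
    · exact continuous_norm.rpow_const fun x => Or.inr he0
    · apply Continuous.rpow_const
      · apply Continuous.div continuous_const
        · exact (continuous_const.add
            (((continuous_pow 2).sub continuous_const).norm.pow 2)).pow 2
        · exact fun x => (pow_pos (hden x) 2).ne'
      · exact fun x => Or.inr hp0.le
  have hFint : IntegrableOn F B1 := by
    have h : IntegrableOn F (Metric.closedBall (0:ℂ) 1) volume :=
      hFcont.continuousOn.integrableOn_compact (isCompact_closedBall (0:ℂ) 1)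
    exact h.mono_set Metric.ball_subset_closedBall
  set t : Set ℂ := Metric.ball (0:ℂ) r0 with htdef
  have hsplit : (∫ x in B1, F x) = (∫ x in B1 ∩ t, F x) + ∫ x in B1 \ t, F x :=
    (integral_inter_add_diff measurableSet_ball hFint).symm
  -- Bound on the inner region
  set K1 : ℝ := r0 ^ e * (1024 / lam) ^ p with hK1def
  have hK1nn : 0 ≤ K1 :=
    mul_nonneg (Real.rpow_nonneg hr0.le e) (Real.rpow_nonneg (by positivity) p)
  have hB1 : (∫ x in B1 ∩ t, F x) ≤ K1 * (π * (R * Real.sqrt lam)) := by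
    have hbound : ∀ x ∈ B1 ∩ t, ‖F x‖ ≤ K1 := by
      intro x hx
      rw [Real.norm_eq_abs, abs_of_nonneg (hF0 x)]
      have hx1 : ‖x‖ ≤ r0 := by
        have h := hx.2
        rw [htdef, Metric.mem_ball, dist_zero_right] at h
        exact h.le
      have h1 : ‖x‖ ^ e ≤ r0 ^ e := Real.rpow_le_rpow (norm_nonneg x) hx1 he0
      have h2 : lam / (lam / 32 + ‖x ^ 2 - b‖ ^ 2) ^ 2 ≤ 1024 / lam := by
        have hA : lam / 32 ≤ lam / 32 + ‖x ^ 2 - b‖ ^ 2 :=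
          le_add_of_nonneg_right (by positivity)
        have h3 : (lam / 32) ^ 2 ≤ (lam / 32 + ‖x ^ 2 - b‖ ^ 2) ^ 2 :=
          pow_le_pow_left₀ (by linarith) hA 2
        calc lam / (lam / 32 + ‖x ^ 2 - b‖ ^ 2) ^ 2 ≤ lam / (lam / 32) ^ 2 :=
              div_le_div_of_nonneg_left hl0.le (by positivity) h3
          _ = 1024 / lam := by field_simp; ring
      have h2' : (lam / (lam / 32 + ‖x ^ 2 - b‖ ^ 2) ^ 2) ^ p ≤ (1024 / lam) ^ p :=
        Real.rpow_le_rpow (by positivity) h2 hp0.le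
      exact mul_le_mul h1 h2' (Real.rpow_nonneg (by positivity) p)
        (Real.rpow_nonneg hr0.le e)
    have hμfin : volume (B1 ∩ t) < ⊤ :=
      lt_of_le_of_lt (measure_mono inter_subset_left) measure_ball_lt_top
    have hmeas : MeasurableSet (B1 ∩ t) := measurableSet_ball.inter measurableSet_ball
    have hnorm := norm_setIntegral_le_of_norm_le_const hμfin hbound
    have htr : (volume (B1 ∩ t)).toReal ≤ π * (R * Real.sqrt lam) := by
      have hle : (volume (B1 ∩ t)).toReal ≤ (volume t).toReal := by
        apply ENNReal.toReal_mono
        · exact (measure_ball_lt_top).ne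
        · exact measure_mono inter_subset_right
      have hvt : (volume t).toReal = π * (R * Real.sqrt lam) := by
        rw [htdef, Complex.volume_ball, ENNReal.toReal_mul, ENNReal.toReal_pow,
          ENNReal.toReal_ofReal hr0.le, ENNReal.coe_toReal, ← NNReal.coe_real_pi]
        rw [hr0sq]
        ring
      linarith
    calc (∫ x in B1 ∩ t, F x) ≤ ‖∫ x in B1 ∩ t, F x‖ := le_abs_self _
      _ ≤ K1 * (volume (B1 ∩ t)).toReal := hnorm
      _ ≤ K1 * (π * (R * Real.sqrt lam)) := mul_le_mul_of_nonneg_left htr hK1nn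
  -- Bound on the outer region
  set G : ℂ → ℝ := fun x => (16:ℝ) ^ p * lam ^ p * (2:ℝ) ^ (-α) * (r0 + ‖x‖) ^ α
    with hGdef
  have hGnn : ∀ x, 0 ≤ G x := fun x =>
    mul_nonneg (mul_nonneg (mul_nonneg (Real.rpow_nonneg (by norm_num) p)
      (Real.rpow_nonneg hl0.le p)) (Real.rpow_nonneg (by norm_num) (-α)))
      (Real.rpow_nonneg (by positivity) α)
  have hGint : Integrable G := (aux_integrable_shift hα3 hr0).const_mul _
  have hFG : ∀ x ∈ B1 \ t, F x ≤ G x := by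
    intro x hx
    have hxr : r0 ≤ ‖x‖ := by
      have h := hx.2
      rw [htdef, Metric.mem_ball, dist_zero_right] at h
      exact not_lt.1 h
    have hx0 : 0 < ‖x‖ := lt_of_lt_of_le hr0 hxr
    have hnx2 : ‖x ^ 2‖ = ‖x‖ ^ 2 := norm_pow x 2
    have hRx : R * Real.sqrt lam ≤ ‖x‖ ^ 2 := by
      calc R * Real.sqrt lam = r0 ^ 2 := hr0sq.symm
        _ ≤ ‖x‖ ^ 2 := pow_le_pow_left₀ hr0.le hxr 2
    have hlb : ‖x‖ ^ 2 / 2 ≤ ‖x ^ 2 - b‖ := by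
      have h1 : ‖x ^ 2‖ - ‖b‖ ≤ ‖x ^ 2 - b‖ := norm_sub_norm_le _ _
      rw [hnx2] at h1
      have h2 : M * Real.sqrt lam ≤ ‖x‖ ^ 2 / 2 := by
        have hR' : R * Real.sqrt lam = 2 * (M * Real.sqrt lam) + 2 * Real.sqrt lam := by
          rw [hRdef]; ring
        nlinarith [Real.sqrt_nonneg lam]
      linarith
    have hpos2 : (0:ℝ) < ‖x‖ ^ 2 / 2 := by positivity
    have hbase : lam / (lam / 32 + ‖x ^ 2 - b‖ ^ 2) ^ 2 ≤ 16 * lam / (‖x‖ ^ 2) ^ 4 := by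
      have hne : ‖x‖ ≠ 0 := hx0.ne'
      have hstep : (‖x‖ ^ 2 / 2) ^ 2 ≤ lam / 32 + ‖x ^ 2 - b‖ ^ 2 :=
        le_trans (pow_le_pow_left₀ hpos2.le hlb 2) (le_add_of_nonneg_left (by positivity))
      calc lam / (lam / 32 + ‖x ^ 2 - b‖ ^ 2) ^ 2
          ≤ lam / ((‖x‖ ^ 2 / 2) ^ 2) ^ 2 :=
            div_le_div_of_nonneg_left hl0.le (by positivity)
              (pow_le_pow_left₀ (by positivity) hstep 2)
        _ = 16 * lam / (‖x‖ ^ 2) ^ 4 := by field_simp; ring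
    have hbasep : (lam / (lam / 32 + ‖x ^ 2 - b‖ ^ 2) ^ 2) ^ p
        ≤ (16 * lam / (‖x‖ ^ 2) ^ 4) ^ p :=
      Real.rpow_le_rpow (by positivity) hbase hp0.le
    have hFle : F x ≤ ‖x‖ ^ e * (16 * lam / (‖x‖ ^ 2) ^ 4) ^ p :=
      mul_le_mul_of_nonneg_left hbasep (Real.rpow_nonneg (norm_nonneg x) e)
    have hcalc : ‖x‖ ^ e * (16 * lam / (‖x‖ ^ 2) ^ 4) ^ p
        = (16:ℝ) ^ p * lam ^ p * ‖x‖ ^ α := by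
      have h8 : ((‖x‖ ^ 2) ^ 4 : ℝ) = ‖x‖ ^ ((8:ℝ)) := by
        rw [← pow_mul, ← Real.rpow_natCast ‖x‖ 8]
        norm_num
      rw [Real.div_rpow (by positivity) (by positivity),
        Real.mul_rpow (by norm_num) hl0.le, h8, ← Real.rpow_mul (norm_nonneg x)]
      rw [div_eq_mul_inv, ← Real.rpow_neg (norm_nonneg x)]
      rw [mul_comm (‖x‖ ^ e) _, mul_assoc, ← Real.rpow_add hx0]
      have hexp : -(8 * p) + e = α := by rw [hedef, hαdef]; ring
      rw [hexp]
    have hxα : ‖x‖ ^ α ≤ (2:ℝ) ^ (-α) * (r0 + ‖x‖) ^ α := by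
      have hmid : (0:ℝ) < (r0 + ‖x‖) / 2 := by positivity
      have hmid2 : (r0 + ‖x‖) / 2 ≤ ‖x‖ := by linarith
      have h := Real.rpow_le_rpow_of_nonpos hmid hmid2 hα0
      calc ‖x‖ ^ α ≤ ((r0 + ‖x‖) / 2) ^ α := h
        _ = (2:ℝ) ^ (-α) * (r0 + ‖x‖) ^ α := by
            rw [Real.div_rpow (by positivity) (by norm_num),
              Real.rpow_neg (by norm_num : (0:ℝ) ≤ 2)]
            rw [div_eq_mul_inv, mul_comm]
    calc F x ≤ ‖x‖ ^ e * (16 * lam / (‖x‖ ^ 2) ^ 4) ^ p := hFle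
      _ = (16:ℝ) ^ p * lam ^ p * ‖x‖ ^ α := hcalc
      _ ≤ (16:ℝ) ^ p * lam ^ p * ((2:ℝ) ^ (-α) * (r0 + ‖x‖) ^ α) := by
          apply mul_le_mul_of_nonneg_left hxα
          exact mul_nonneg (Real.rpow_nonneg (by norm_num) p) (Real.rpow_nonneg hl0.le p)
      _ = G x := by rw [hGdef]; ring
  have hB2 : (∫ x in B1 \ t, F x)
      ≤ (16:ℝ) ^ p * lam ^ p * (2:ℝ) ^ (-α) * (r0 ^ (α + 2) * Cα) := by
    calc (∫ x in B1 \ t, F x) ≤ ∫ x in B1 \ t, G x :=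
          setIntegral_mono_on (hFint.mono_set diff_subset) hGint.integrableOn
            (measurableSet_ball.diff measurableSet_ball) hFG
      _ ≤ ∫ x : ℂ, G x :=
          setIntegral_le_integral hGint (Eventually.of_forall fun x => hGnn x)
      _ = (16:ℝ) ^ p * lam ^ p * (2:ℝ) ^ (-α) * ∫ x : ℂ, (r0 + ‖x‖) ^ α :=
          integral_const_mul _ _
      _ = (16:ℝ) ^ p * lam ^ p * (2:ℝ) ^ (-α) * (r0 ^ (α + 2) * Cα) := by
          rw [aux_integral_shift r0 hr0, hCadef]
  -- Final assembly
  have hq0 : (0:ℝ) ≤ 1 / p := by positivity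
  have hq1 : 1 / p ≤ 1 := by rw [div_le_one hp0]; exact hp
  have hI1nn : 0 ≤ ∫ x in B1 ∩ t, F x :=
    setIntegral_nonneg (measurableSet_ball.inter measurableSet_ball) fun x _ => hF0 x
  have hI2nn : 0 ≤ ∫ x in B1 \ t, F x :=
    setIntegral_nonneg (measurableSet_ball.diff measurableSet_ball) fun x _ => hF0 x
  set A1 : ℝ := K1 * (π * (R * Real.sqrt lam)) with hA1def
  set A2 : ℝ := (16:ℝ) ^ p * lam ^ p * (2:ℝ) ^ (-α) * (r0 ^ (α + 2) * Cα) with hA2def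
  have hA1nn : 0 ≤ A1 := le_trans hI1nn hB1
  have hA2nn : 0 ≤ A2 := le_trans hI2nn hB2
  have hLnn : (0:ℝ) ≤ lam ^ ((s:ℝ)/4 * p) * lam ^ (w * p) :=
    mul_nonneg (Real.rpow_nonneg hl0.le _) (Real.rpow_nonneg hl0.le _)
  -- the first bound at power p
  have hA1eq : A1 = R ^ (e/2) * 1024 ^ p * (π * R)
      * (lam ^ ((s:ℝ)/4 * p) * lam ^ (w * p)) := by
    have hlam1 : lam ^ ((e/2)/2) * lam ^ ((1:ℝ)/2) / lam ^ p
        = lam ^ ((s:ℝ)/4 * p) * lam ^ (w * p) := by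
      rw [← Real.rpow_add hl0, ← Real.rpow_sub hl0, ← Real.rpow_add hl0]
      congr 1
      rw [hedef, hwdef]
      field_simp
      ring
    rw [hA1def, hK1def, hr0def, aux_sqrt_rpow hRs0.le e,
      Real.mul_rpow hR0.le hsl.le, aux_sqrt_rpow hl0.le (e/2),
      Real.div_rpow (by norm_num : (0:ℝ) ≤ 1024) hl0.le, Real.sqrt_eq_rpow]
    rw [← hlam1]
    field_simp
  have hC1p : (C1 * lam ^ ((s:ℝ)/4) * lam ^ w) ^ p
      = 1024 ^ p * R ^ (e/2) * (π * R + 1) ^ p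
      * (lam ^ ((s:ℝ)/4 * p) * lam ^ (w * p)) := by
    have hx1 : (0:ℝ) ≤ C1 * lam ^ ((s:ℝ)/4) :=
      mul_nonneg hC1pos.le (Real.rpow_nonneg hl0.le _)
    have hπR1 : (0:ℝ) ≤ π * R + 1 := by nlinarith
    have h1024R : (0:ℝ) ≤ 1024 * R ^ (((2:ℝ) + s) / 2) :=
      mul_nonneg (by norm_num) (Real.rpow_nonneg hR0.le _)
    rw [Real.mul_rpow hx1 (Real.rpow_nonneg hl0.le _),
      Real.mul_rpow hC1pos.le (Real.rpow_nonneg hl0.le _), hC1def,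
      Real.mul_rpow h1024R hπR1,
      Real.mul_rpow (by norm_num : (0:ℝ) ≤ 1024) (Real.rpow_nonneg hR0.le _),
      ← Real.rpow_mul hR0.le, ← Real.rpow_mul hl0.le, ← Real.rpow_mul hl0.le]
    have hex : ((2:ℝ) + s) / 2 * p = e / 2 := by rw [hedef]; ring
    rw [hex]
    ring
  have hπR1' : (1:ℝ) ≤ π * R + 1 := by nlinarith
  have hπR : π * R ≤ (π * R + 1) ^ p := by
    calc π * R ≤ π * R + 1 := by linarith
      _ = (π * R + 1) ^ (1:ℝ) := (Real.rpow_one _).symm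
      _ ≤ (π * R + 1) ^ p := Real.rpow_le_rpow_of_exponent_le hπR1' hp
  have hT1 : A1 ≤ (C1 * lam ^ ((s:ℝ)/4) * lam ^ w) ^ p := by
    rw [hA1eq, hC1p]
    apply mul_le_mul_of_nonneg_right _ hLnn
    calc R ^ (e/2) * 1024 ^ p * (π * R)
        = (R ^ (e/2) * 1024 ^ p) * (π * R) := by ring
      _ ≤ (R ^ (e/2) * 1024 ^ p) * (π * R + 1) ^ p :=
          mul_le_mul_of_nonneg_left hπR
            (mul_nonneg (Real.rpow_nonneg hR0.le _) (Real.rpow_nonneg (by norm_num) _))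
      _ = 1024 ^ p * R ^ (e/2) * (π * R + 1) ^ p := by ring
  -- the second bound at power p
  have h2a : r0 ^ (α + 2) ≤ lam ^ ((α + 2)/4) := by
    have h1 : r0 ^ (α + 2) = R ^ ((α + 2)/2) * lam ^ ((α + 2)/4) := by
      rw [hr0def, aux_sqrt_rpow hRs0.le, Real.mul_rpow hR0.le hsl.le,
        aux_sqrt_rpow hl0.le]
      congr 2
      ring
    rw [h1]
    have h2 : R ^ ((α + 2)/2) ≤ 1 :=
      Real.rpow_le_one_of_one_le_of_nonpos (by linarith) (by linarith)
    calc R ^ ((α + 2)/2) * lam ^ ((α + 2)/4) ≤ 1 * lam ^ ((α + 2)/4) :=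
          mul_le_mul_of_nonneg_right h2 (Real.rpow_nonneg hl0.le _)
      _ = lam ^ ((α + 2)/4) := one_mul _
  have h2b : (2:ℝ) ^ (-α) ≤ 64 ^ p := by
    have hαeq : -α = ((6:ℝ) - s) * p := by rw [hαdef]; ring
    rw [hαeq, Real.rpow_mul (by norm_num : (0:ℝ) ≤ 2)]
    apply Real.rpow_le_rpow (Real.rpow_nonneg (by norm_num) _) _ hp0.le
    calc (2:ℝ) ^ ((6:ℝ) - s) ≤ (2:ℝ) ^ ((6:ℝ)) :=
          Real.rpow_le_rpow_of_exponent_le one_le_two (by linarith)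
      _ = 64 := by
          rw [show ((6:ℝ)) = ((6:ℕ):ℝ) by norm_num, Real.rpow_natCast]
          norm_num
  have h2c : Cα ≤ (Cα + 1) ^ p := by
    calc Cα ≤ Cα + 1 := by linarith
      _ = (Cα + 1) ^ (1:ℝ) := (Real.rpow_one _).symm
      _ ≤ (Cα + 1) ^ p := Real.rpow_le_rpow_of_exponent_le (by linarith) hp
  have hC2p : (C2 * lam ^ ((s:ℝ)/4) * lam ^ w) ^ p
      = 1024 ^ p * (Cα + 1) ^ p * (lam ^ ((s:ℝ)/4 * p) * lam ^ (w * p)) := by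
    have hx2 : (0:ℝ) ≤ C2 * lam ^ ((s:ℝ)/4) :=
      mul_nonneg hC2pos.le (Real.rpow_nonneg hl0.le _)
    rw [Real.mul_rpow hx2 (Real.rpow_nonneg hl0.le _),
      Real.mul_rpow hC2pos.le (Real.rpow_nonneg hl0.le _), hC2def,
      Real.mul_rpow (by norm_num : (0:ℝ) ≤ 1024) (by linarith : (0:ℝ) ≤ Cα + 1),
      ← Real.rpow_mul hl0.le, ← Real.rpow_mul hl0.le]
    ring
  have hT2 : A2 ≤ (C2 * lam ^ ((s:ℝ)/4) * lam ^ w) ^ p := by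
    have hstep1 : r0 ^ (α + 2) * Cα ≤ lam ^ ((α + 2)/4) * (Cα + 1) ^ p :=
      mul_le_mul h2a h2c hCα0 (Real.rpow_nonneg hl0.le _)
    have h16l : (0:ℝ) ≤ (16:ℝ) ^ p * lam ^ p :=
      mul_nonneg (Real.rpow_nonneg (by norm_num) _) (Real.rpow_nonneg hl0.le _)
    have hstep2 : A2 ≤ (16:ℝ) ^ p * lam ^ p * 64 ^ p
        * (lam ^ ((α + 2)/4) * (Cα + 1) ^ p) := by
      rw [hA2def]
      apply mul_le_mul
      · exact mul_le_mul_of_nonneg_left h2b h16l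
      · exact hstep1
      · exact mul_nonneg (Real.rpow_nonneg hr0.le _) hCα0
      · exact mul_nonneg h16l (Real.rpow_nonneg (by norm_num) _)
    have hlameq : lam ^ p * lam ^ ((α + 2)/4)
        = lam ^ ((s:ℝ)/4 * p) * lam ^ (w * p) := by
      rw [← Real.rpow_add hl0, ← Real.rpow_add hl0]
      congr 1
      rw [hαdef, hwdef]
      field_simp
      ring
    have heq : (16:ℝ) ^ p * lam ^ p * 64 ^ p * (lam ^ ((α + 2)/4) * (Cα + 1) ^ p)
        = (C2 * lam ^ ((s:ℝ)/4) * lam ^ w) ^ p := by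
      rw [hC2p]
      calc (16:ℝ) ^ p * lam ^ p * 64 ^ p * (lam ^ ((α + 2)/4) * (Cα + 1) ^ p)
          = ((16:ℝ) ^ p * 64 ^ p) * (Cα + 1) ^ p * (lam ^ p * lam ^ ((α + 2)/4)) := by
            ring
        _ = 1024 ^ p * (Cα + 1) ^ p * (lam ^ ((s:ℝ)/4 * p) * lam ^ (w * p)) := by
            rw [← Real.mul_rpow (by norm_num : (0:ℝ) ≤ 16) (by norm_num : (0:ℝ) ≤ 64),
              hlameq]
            norm_num
    linarith [hstep2, heq.le, heq.ge]
  -- conclude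
  have hK1' : (0:ℝ) ≤ C1 * lam ^ ((s:ℝ)/4) * lam ^ w :=
    mul_nonneg (mul_nonneg hC1pos.le (Real.rpow_nonneg hl0.le _))
      (Real.rpow_nonneg hl0.le _)
  have hK2' : (0:ℝ) ≤ C2 * lam ^ ((s:ℝ)/4) * lam ^ w :=
    mul_nonneg (mul_nonneg hC2pos.le (Real.rpow_nonneg hl0.le _))
      (Real.rpow_nonneg hl0.le _)
  have hpinv : p * (1/p) = 1 := by field_simp
  have hE1 : A1 ^ (1/p) ≤ C1 * lam ^ ((s:ℝ)/4) * lam ^ w := by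
    have h := Real.rpow_le_rpow hA1nn hT1 hq0
    rwa [← Real.rpow_mul hK1', hpinv, Real.rpow_one] at h
  have hE2 : A2 ^ (1/p) ≤ C2 * lam ^ ((s:ℝ)/4) * lam ^ w := by
    have h := Real.rpow_le_rpow hA2nn hT2 hq0
    rwa [← Real.rpow_mul hK2', hpinv, Real.rpow_one] at h
  calc (∫ x in B1, F x) ^ (1/p)
      = ((∫ x in B1 ∩ t, F x) + ∫ x in B1 \ t, F x) ^ (1/p) := by rw [hsplit]
    _ ≤ (A1 + A2) ^ (1/p) :=
        Real.rpow_le_rpow (add_nonneg hI1nn hI2nn) (add_le_add hB1 hB2) hq0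
    _ ≤ A1 ^ (1/p) + A2 ^ (1/p) := aux_add_rpow_le hA1nn hA2nn hq0 hq1
    _ ≤ C1 * lam ^ ((s:ℝ)/4) * lam ^ w + C2 * lam ^ ((s:ℝ)/4) * lam ^ w :=
        add_le_add hE1 hE2
    _ = (C1 + C2) * lam ^ ((s:ℝ)/4) * lam ^ w := by ring
end
end

section
/- For λ>0 and b∈ℂ let e^{W_{λ,b}(x)} = λ/(λ/32 + |x²−b|²)², and define Z¹_{λ,b}(x) = √(λ/32)·Re(x²−b)/(λ/32 + |x²−b|²) and Z²_{λ,b}(x) = √(λ/32)·Im(x²−b)/(λ/32 + |x²−b|²). Then, for every λ>0 and b∈ℂ: ∫_{ℝ²}(Z¹_{λ,b})² |x|² e^{W_{λ,b}} dx = ∫_{ℝ²}(Z²_{λ,b})² |x|² e^{W_{λ,b}} dx = 4π/3, and ∫_{ℝ²} Z¹_{λ,b} Z²_{λ,b} |x|² e^{W_{λ,b}} dx = 0. -/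
open MeasureTheory Filter Real Set

noncomputable section

/-- The bubble `e^{W_{λ,b}(x)} = λ/(λ/32 + |x²-b|²)²`. -/
def eW (lam : ℝ) (b : ℂ) (x : ℂ) : ℝ := lam / (lam / 32 + ‖x ^ 2 - b‖ ^ 2) ^ 2

/-- `Z¹_{λ,b}(x) = √(λ/32) Re(x²-b)/(λ/32 + |x²-b|²)`. -/
def Z1 (lam : ℝ) (b : ℂ) (x : ℂ) : ℝ :=
  Real.sqrt (lam / 32) * (x ^ 2 - b).re / (lam / 32 + ‖x ^ 2 - b‖ ^ 2)

/-- `Z²_{λ,b}(x) = √(λ/32) Im(x²-b)/(λ/32 + |x²-b|²)`. -/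
def Z2 (lam : ℝ) (b : ℂ) (x : ℂ) : ℝ :=
  Real.sqrt (lam / 32) * (x ^ 2 - b).im / (lam / 32 + ‖x ^ 2 - b‖ ^ 2)

/- ### Auxiliary lemmas -/

lemma radial_integral (m : ℝ) (hm : 0 < m) :
    ∫ r in Ioi (0:ℝ), r ^ 3 / (m + r ^ 2) ^ 4 = 1 / (12 * m ^ 2) := by
  have hpos : ∀ r : ℝ, 0 < m + r ^ 2 := fun r => by positivity
  have key := integral_Ioi_of_hasDerivAt_of_nonneg
    (g := fun r : ℝ => m / (6 * (m + r ^ 2) ^ 3) - 1 / (4 * (m + r ^ 2) ^ 2))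
    (g' := fun r : ℝ => r ^ 3 / (m + r ^ 2) ^ 4) (a := 0) (l := 0)
    ?_ ?_ ?_ ?_
  · rw [key]; field_simp; ring
  · apply Continuous.continuousWithinAt
    apply Continuous.sub
    · exact continuous_const.div (by continuity) (fun r => by positivity)
    · exact continuous_const.div (by continuity) (fun r => by positivity)
  · intro x hx
    have h1 : HasDerivAt (fun r : ℝ => m + r ^ 2) (2 * x) x := by
      simpa using ((hasDerivAt_pow 2 x).const_add m)
    have h2 : HasDerivAt (fun r : ℝ => 6 * (m + r ^ 2) ^ 3)
        (6 * (3 * (m + x ^ 2) ^ 2 * (2 * x))) x := ((h1.pow 3).const_mul 6)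
    have h3 : HasDerivAt (fun r : ℝ => 4 * (m + r ^ 2) ^ 2)
        (4 * (2 * (m + x ^ 2) ^ 1 * (2 * x))) x := ((h1.pow 2).const_mul 4)
    have h4 := ((hasDerivAt_const x m).div h2 (by positivity)).sub
      ((hasDerivAt_const x (1:ℝ)).div h3 (by positivity))
    refine HasDerivAt.congr_deriv h4 ?_
    have := (hpos x).ne'
    field_simp
    ring
  · intro x hx
    have := le_of_lt (mem_Ioi.mp hx)
    positivity
  · have t1 : Tendsto (fun r : ℝ => m + r ^ 2) atTop atTop :=
      tendsto_atTop_add_const_left _ m (tendsto_pow_atTop two_ne_zero)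
    have t2 : Tendsto (fun r : ℝ => 6 * (m + r ^ 2) ^ 3) atTop atTop :=
      (tendsto_pow_atTop (three_ne_zero)).comp t1 |>.const_mul_atTop (by norm_num)
    have t3 : Tendsto (fun r : ℝ => 4 * (m + r ^ 2) ^ 2) atTop atTop :=
      (tendsto_pow_atTop (two_ne_zero)).comp t1 |>.const_mul_atTop (by norm_num)
    have := (tendsto_const_nhds (x := m)).div_atTop t2 |>.sub
      ((tendsto_const_nhds (x := (1:ℝ))).div_atTop t3)
    simpa using this

lemma ioo_to_interval (f : ℝ → ℝ) :
    ∫ θ in Ioo (-π) π, f θ = ∫ θ in (-π)..π, f θ := by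
  rw [intervalIntegral.integral_of_le (by linarith [pi_pos]), integral_Ioc_eq_integral_Ioo]

lemma ang_cos : ∫ θ in Ioo (-π) π, cos θ ^ 2 = π := by
  rw [ioo_to_interval, integral_cos_sq]
  simp [Real.sin_pi, Real.cos_pi]

lemma ang_sin : ∫ θ in Ioo (-π) π, sin θ ^ 2 = π := by
  rw [ioo_to_interval, integral_sin_sq]
  simp [Real.sin_pi, Real.cos_pi]

lemma ang_cross : ∫ θ in Ioo (-π) π, cos θ * sin θ = 0 := by
  rw [ioo_to_interval]
  have : ∀ θ, cos θ * sin θ = sin θ * cos θ := fun θ => mul_comm _ _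
  simp_rw [this, integral_sin_mul_cos₁]
  simp

lemma integral_complex_polar (m : ℝ) (hm : 0 < m) (A : ℂ → ℝ) (g : ℝ → ℝ)
    (hA : ∀ r θ : ℝ, A (Complex.polarCoord.symm (r, θ)) = r ^ 2 * g θ) :
    ∫ y : ℂ, A y / (m + ‖y‖ ^ 2) ^ 4 = (1 / (12 * m ^ 2)) * ∫ θ in Ioo (-π) π, g θ := by
  rw [← Complex.integral_comp_polarCoord_symm (fun y => A y / (m + ‖y‖ ^ 2) ^ 4),
    show polarCoord.target = Ioi (0:ℝ) ×ˢ Ioo (-π) π from rfl]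
  have heq : ∀ p ∈ (Ioi (0:ℝ) ×ˢ Ioo (-π) π),
      p.1 • (A (Complex.polarCoord.symm p) / (m + ‖Complex.polarCoord.symm p‖ ^ 2) ^ 4)
      = (p.1 ^ 3 / (m + p.1 ^ 2) ^ 4) * g p.2 := by
    intro p hp
    have hnorm : ‖Complex.polarCoord.symm p‖ ^ 2 = p.1 ^ 2 := by
      rw [Complex.norm_polarCoord_symm, sq_abs]
    rw [hnorm, hA p.1 p.2, smul_eq_mul]
    ring
  rw [setIntegral_congr_fun (measurableSet_Ioi.prod measurableSet_Ioo) heq,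
    Measure.volume_eq_prod,
    setIntegral_prod_mul (fun r : ℝ => r ^ 3 / (m + r ^ 2) ^ 4) g _ _, radial_integral m hm]

lemma det_mul_complex (c : ℂ) :
    (((1 : ℂ →L[ℂ] ℂ).smulRight c).restrictScalars ℝ).det = Complex.normSq c := by
  have h : (((1 : ℂ →L[ℂ] ℂ).smulRight c).restrictScalars ℝ : ℂ →ₗ[ℝ] ℂ)
      = Algebra.lmul ℝ ℂ c := by
    apply LinearMap.ext
    intro w
    simp [mul_comm]
  rw [ContinuousLinearMap.det, h]
  exact (Algebra.norm_apply (R := ℝ) c) ▸ Algebra.norm_complex_apply c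

lemma null_re_zero : volume {z : ℂ | z.re = 0} = 0 := by
  have h : {z : ℂ | z.re = 0} = Complex.measurableEquivRealProd ⁻¹' ({0} ×ˢ univ) := by
    ext z
    simp [Complex.measurableEquivRealProd, Complex.equivRealProdLm]
  rw [h, Complex.volume_preserving_equiv_real_prod.measure_preimage
    ((measurableSet_singleton 0).prod MeasurableSet.univ).nullMeasurableSet]
  rw [Measure.volume_eq_prod, Measure.prod_prod]
  simp

lemma null_im_zero : volume {z : ℂ | z.im = 0} = 0 := by
  have h : {z : ℂ | z.im = 0} = Complex.measurableEquivRealProd ⁻¹' (univ ×ˢ {0}) := by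
    ext z
    simp [Complex.measurableEquivRealProd, Complex.equivRealProdLm]
  rw [h, Complex.volume_preserving_equiv_real_prod.measure_preimage
    (MeasurableSet.univ.prod (measurableSet_singleton 0)).nullMeasurableSet]
  rw [Measure.volume_eq_prod, Measure.prod_prod]
  simp

lemma integral_sq_eq (f : ℂ → ℝ) (hf : Integrable f) :
    ∫ x : ℂ, f (x ^ 2) * ‖x‖ ^ 2 = (1 / 2) * ∫ y : ℂ, f y := by
  set s : Set ℂ := {z | 0 < z.re} with hs_def
  have hs : MeasurableSet s := measurableSet_lt measurable_const Complex.measurable_re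
  set F' : ℂ → (ℂ →L[ℝ] ℂ) :=
    fun z => ((1 : ℂ →L[ℂ] ℂ).smulRight (2 * z)).restrictScalars ℝ with hF'
  have hd : ∀ x : ℂ, HasFDerivAt (fun z : ℂ => z ^ 2) (F' x) x := by
    intro x
    have h : HasDerivAt (fun z : ℂ => z ^ 2) (2 * x) x := by simpa using hasDerivAt_pow 2 x
    exact (hasDerivAt_iff_hasFDerivAt.1 h).restrictScalars ℝ
  have hdet : ∀ x : ℂ, |(F' x).det| = 4 * ‖x‖ ^ 2 := by
    intro x
    rw [hF', det_mul_complex, abs_of_nonneg (Complex.normSq_nonneg _), ← Complex.sq_norm,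
      norm_mul]
    norm_num
    ring
  have hinj : InjOn (fun z : ℂ => z ^ 2) s := by
    intro a ha b hb h
    simp only at h
    have h2 : (a - b) * (a + b) = 0 := by linear_combination h
    rcases mul_eq_zero.1 h2 with h3 | h3
    · exact sub_eq_zero.1 h3
    · exfalso
      have ha' : 0 < a.re := ha
      have hb' : 0 < b.re := hb
      have h4 : a = -b := eq_neg_of_add_eq_zero_left h3
      rw [h4] at ha'
      simp only [Complex.neg_re] at ha'
      linarith
  have himg : (fun z : ℂ => z ^ 2) '' s = Complex.slitPlane := by
    ext w
    constructor
    · rintro ⟨z, hz, rfl⟩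
      have hz' : 0 < z.re := hz
      rcases eq_or_ne z.im 0 with h | h
      · left
        show 0 < (z ^ 2).re
        rw [pow_two, Complex.mul_re, h]
        simpa using mul_pos hz' hz'
      · right
        show (z ^ 2).im ≠ 0
        rw [pow_two, Complex.mul_im]
        have h2 : z.re * z.im + z.im * z.re = 2 * (z.re * z.im) := by ring
        rw [h2]
        positivity
    · intro hw
      obtain ⟨z, hz⟩ := IsAlgClosed.exists_pow_nat_eq w (n := 2) (by norm_num)
      have hw0 : w ≠ 0 := Complex.slitPlane_ne_zero hw
      have hz0 : z ≠ 0 := by rintro rfl; simp at hz; exact hw0 hz.symm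
      rcases lt_trichotomy z.re 0 with h | h | h
      · refine ⟨-z, ?_, by simpa using hz⟩
        show 0 < (-z).re
        simpa using h
      · exfalso
        have him : z.im ≠ 0 := by
          intro h'
          exact hz0 (Complex.ext h h')
        have h1 : w.im = 0 := by
          rw [← hz, pow_two, Complex.mul_im, h]
          ring
        have h2 : w.re = -z.im ^ 2 := by
          rw [← hz, pow_two, Complex.mul_re, h]
          ring
        rcases hw with h3 | h3
        · rw [h2] at h3; nlinarith [sq_nonneg z.im]
        · exact h3 h1
      · exact ⟨z, h, hz⟩
  have hcompl_img : volume ((fun z : ℂ => z ^ 2) '' s)ᶜ = 0 := by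
    rw [himg]
    refine measure_mono_null (fun z hz => ?_) null_im_zero
    simp only [Complex.mem_slitPlane_iff, not_or, not_lt, ne_eq, not_not, mem_compl_iff,
      mem_setOf_eq] at hz ⊢
    exact hz.2
  have hmain : ∫ y in (fun z : ℂ => z ^ 2) '' s, f y = ∫ x in s, |(F' x).det| • f (x ^ 2) :=
    integral_image_eq_integral_abs_det_fderiv_smul volume hs
      (fun x _ => (hd x).hasFDerivWithinAt) hinj f
  have himg_ae : ((fun z : ℂ => z ^ 2) '' s : Set ℂ) =ᵐ[volume] univ := by
    rw [ae_eq_univ]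
    exact hcompl_img
  have hIf : ∫ y : ℂ, f y = ∫ x in s, (4 * ‖x‖ ^ 2) * f (x ^ 2) := by
    rw [← setIntegral_univ, ← setIntegral_congr_set himg_ae, hmain]
    refine setIntegral_congr_fun hs (fun x _ => ?_)
    rw [hdet x, smul_eq_mul]
  have hInt_s0 : IntegrableOn (fun x : ℂ => |(F' x).det| • f (x ^ 2)) s volume :=
    (integrableOn_image_iff_integrableOn_abs_det_fderiv_smul volume hs
      (fun x _ => (hd x).hasFDerivWithinAt) hinj f).1 hf.integrableOn
  have hg_s : IntegrableOn (fun x : ℂ => f (x ^ 2) * ‖x‖ ^ 2) s volume := by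
    refine IntegrableOn.congr_fun (Integrable.const_mul hInt_s0 (1 / 4 : ℝ)) (fun x _ => ?_) hs
    rw [hdet x, smul_eq_mul]
    ring
  have hdneg : ∀ x : ℂ, HasFDerivAt (fun z : ℂ => -z)
      (((1 : ℂ →L[ℂ] ℂ).smulRight (-1)).restrictScalars ℝ) x := by
    intro x
    exact (hasDerivAt_iff_hasFDerivAt.1 (hasDerivAt_neg x)).restrictScalars ℝ
  have hdetneg : |((((1 : ℂ →L[ℂ] ℂ).smulRight (-1 : ℂ)).restrictScalars ℝ)).det| = 1 := by
    rw [det_mul_complex]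
    simp
  have hinj_neg : InjOn (fun z : ℂ => -z) s := fun a _ b _ h => neg_injective h
  have himg_neg : (fun z : ℂ => -z) '' s = -s := Set.image_neg_eq_neg
  have hg_even : ∀ x : ℂ, f ((-x) ^ 2) * ‖-x‖ ^ 2 = f (x ^ 2) * ‖x‖ ^ 2 := by
    intro x
    rw [neg_pow, norm_neg]
    simp
  have hneg_int_eq : ∫ x in -s, f (x ^ 2) * ‖x‖ ^ 2 = ∫ x in s, f (x ^ 2) * ‖x‖ ^ 2 := by
    rw [← himg_neg,
      integral_image_eq_integral_abs_det_fderiv_smul volume hs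
        (fun x _ => (hdneg x).hasFDerivWithinAt) hinj_neg]
    refine setIntegral_congr_fun hs (fun x _ => ?_)
    rw [hdetneg, one_smul, hg_even]
  have hg_neg : IntegrableOn (fun x : ℂ => f (x ^ 2) * ‖x‖ ^ 2) (-s) volume := by
    rw [← himg_neg]
    rw [integrableOn_image_iff_integrableOn_abs_det_fderiv_smul volume hs
      (fun x _ => (hdneg x).hasFDerivWithinAt) hinj_neg]
    refine hg_s.congr_fun (fun x _ => ?_) hs
    rw [hdetneg, one_smul, hg_even]
  have hdisj : Disjoint s (-s) := by
    rw [Set.disjoint_left]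
    intro z hz1 hz2
    have h1 : 0 < z.re := hz1
    have h2 : 0 < (-z).re := hz2
    simp only [Complex.neg_re] at h2
    linarith
  have hcup : (s ∪ -s : Set ℂ) =ᵐ[volume] univ := by
    rw [ae_eq_univ]
    refine measure_mono_null (fun z hz => ?_) null_re_zero
    simp only [mem_compl_iff, Set.mem_union, not_or, Set.mem_neg, hs_def, mem_setOf_eq,
      not_lt, Complex.neg_re] at hz
    simp only [mem_setOf_eq]
    linarith [hz.1, hz.2]
  calc ∫ x : ℂ, f (x ^ 2) * ‖x‖ ^ 2
      = ∫ x in s ∪ -s, f (x ^ 2) * ‖x‖ ^ 2 := by rw [setIntegral_congr_set hcup, setIntegral_univ]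
    _ = (∫ x in s, f (x ^ 2) * ‖x‖ ^ 2) + ∫ x in -s, f (x ^ 2) * ‖x‖ ^ 2 :=
        setIntegral_union hdisj hs.neg hg_s hg_neg
    _ = 2 * ∫ x in s, f (x ^ 2) * ‖x‖ ^ 2 := by rw [hneg_int_eq]; ring
    _ = (1 / 2) * ∫ x in s, (4 * ‖x‖ ^ 2) * f (x ^ 2) := by
        rw [← integral_const_mul, ← integral_const_mul]
        refine setIntegral_congr_fun hs (fun x _ => ?_)
        ring
    _ = (1 / 2) * ∫ y : ℂ, f y := by rw [← hIf]

lemma integrable_aux (m : ℝ) (hm : 0 < m) (A : ℂ → ℝ) (hAc : Continuous A)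
    (hA : ∀ y : ℂ, |A y| ≤ ‖y‖ ^ 2) :
    Integrable (fun y : ℂ => A y / (m + ‖y‖ ^ 2) ^ 4) := by
  set c := min m 1 with hc
  have hc0 : 0 < c := lt_min hm one_pos
  have hcm : c ≤ m := min_le_left _ _
  have hc1 : c ≤ 1 := min_le_right _ _
  have hInt : Integrable (fun y : ℂ => 8 / (c ^ 3 * (1 + ‖y‖) ^ 4)) := by
    have h0 := (integrable_one_add_norm (E := ℂ) (μ := volume) (r := 4)
      (by rw [Complex.finrank_real_complex]; norm_num)).const_mul (8 / c ^ 3)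
    refine h0.congr (ae_of_all _ fun y => ?_)
    have hy : (0:ℝ) < 1 + ‖y‖ := by positivity
    dsimp only
    rw [Real.rpow_neg hy.le]
    have h4 : (1 + ‖y‖) ^ (4:ℝ) = (1 + ‖y‖) ^ (4:ℕ) := by
      rw [← Real.rpow_natCast]; norm_num
    rw [h4]
    field_simp
  have hmeas : AEStronglyMeasurable (fun y : ℂ => A y / (m + ‖y‖ ^ 2) ^ 4) volume := by
    refine Continuous.aestronglyMeasurable ?_
    exact hAc.div ((continuous_const.add (continuous_norm.pow 2)).pow 4) (fun y => by positivity)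
  refine hInt.mono hmeas (ae_of_all _ fun y => ?_)
  set t := ‖y‖ with ht
  have ht0 : 0 ≤ t := norm_nonneg y
  have hD : (0:ℝ) < m + t ^ 2 := by positivity
  have h1 : |A y| ≤ m + t ^ 2 := (hA y).trans (by nlinarith)
  have h2 : c * (1 + t) ^ 2 ≤ 2 * (m + t ^ 2) := by
    nlinarith [mul_nonneg hc0.le (sq_nonneg (t - 1))]
  have h3 : c ^ 3 * (1 + t) ^ 6 ≤ 8 * (m + t ^ 2) ^ 3 := by
    have := pow_le_pow_left₀ (by positivity) h2 3
    calc c ^ 3 * (1 + t) ^ 6 = (c * (1 + t) ^ 2) ^ 3 := by ring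
      _ ≤ (2 * (m + t ^ 2)) ^ 3 := this
      _ = 8 * (m + t ^ 2) ^ 3 := by ring
  have h4 : (1 + t) ^ 4 ≤ (1 + t) ^ 6 := pow_le_pow_right₀ (by linarith) (by norm_num)
  have h5 : c ^ 3 * (1 + t) ^ 4 ≤ 8 * (m + t ^ 2) ^ 3 := by
    refine le_trans ?_ h3
    have := pow_pos hc0 3
    nlinarith
  have hnorm1 : ‖A y / (m + t ^ 2) ^ 4‖ = |A y| / (m + t ^ 2) ^ 4 := by
    rw [Real.norm_eq_abs, abs_div, abs_of_pos (pow_pos hD 4)]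
  have hnorm2 : ‖(8:ℝ) / (c ^ 3 * (1 + t) ^ 4)‖ = 8 / (c ^ 3 * (1 + t) ^ 4) := by
    rw [Real.norm_eq_abs, abs_of_pos (by positivity)]
  rw [hnorm1, hnorm2, div_le_div_iff₀ (by positivity) (by positivity)]
  calc |A y| * (c ^ 3 * (1 + t) ^ 4) ≤ (m + t ^ 2) * (8 * (m + t ^ 2) ^ 3) := by
        exact mul_le_mul h1 h5 (by positivity) hD.le
    _ = 8 * (m + t ^ 2) ^ 4 := by ring

lemma norm_sq_complex (y : ℂ) : ‖y‖ ^ 2 = y.re ^ 2 + y.im ^ 2 := by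
  rw [Complex.sq_norm, Complex.normSq_apply]
  ring

lemma polar_re (r θ : ℝ) : (Complex.polarCoord.symm (r, θ)).re = r * cos θ := by
  rw [Complex.polarCoord_symm_apply]
  simp [Complex.cos_ofReal_re, Complex.sin_ofReal_re]

lemma polar_im (r θ : ℝ) : (Complex.polarCoord.symm (r, θ)).im = r * sin θ := by
  rw [Complex.polarCoord_symm_apply]
  simp [Complex.cos_ofReal_re, Complex.sin_ofReal_re]

/-- The generic computation. -/
lemma main_computation (lam : ℝ) (hlam : 0 < lam) (b : ℂ) (A : ℂ → ℝ) (g : ℝ → ℝ)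
    (hAc : Continuous A) (hAb : ∀ y : ℂ, |A y| ≤ ‖y‖ ^ 2)
    (hApolar : ∀ r θ : ℝ, A (Complex.polarCoord.symm (r, θ)) = r ^ 2 * g θ) :
    ∫ x : ℂ, (lam * (lam / 32)) * (A (x ^ 2 - b) / (lam / 32 + ‖x ^ 2 - b‖ ^ 2) ^ 4) * ‖x‖ ^ 2
      = (1 / 2) * (lam * (lam / 32)) *
        ((1 / (12 * (lam / 32) ^ 2)) * ∫ θ in Ioo (-π) π, g θ) := by
  set m := lam / 32 with hm_def
  have hm : 0 < m := by positivity
  have hint := integrable_aux m hm A hAc hAb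
  have hint2 : Integrable (fun y : ℂ => (lam * m) * (A (y - b) / (m + ‖y - b‖ ^ 2) ^ 4)) :=
    (hint.comp_sub_right b).const_mul _
  calc ∫ x : ℂ, (lam * m) * (A (x ^ 2 - b) / (m + ‖x ^ 2 - b‖ ^ 2) ^ 4) * ‖x‖ ^ 2
      = (1 / 2) * ∫ y : ℂ, (lam * m) * (A (y - b) / (m + ‖y - b‖ ^ 2) ^ 4) :=
        integral_sq_eq (fun y : ℂ => (lam * m) * (A (y - b) / (m + ‖y - b‖ ^ 2) ^ 4)) hint2
    _ = (1 / 2) * ((lam * m) * ∫ y : ℂ, A (y - b) / (m + ‖y - b‖ ^ 2) ^ 4) := by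
        rw [integral_const_mul]
    _ = (1 / 2) * ((lam * m) * ∫ y : ℂ, A y / (m + ‖y‖ ^ 2) ^ 4) := by
        rw [integral_sub_right_eq_self (fun y : ℂ => A y / (m + ‖y‖ ^ 2) ^ 4) b]
    _ = (1 / 2) * (lam * m) * ((1 / (12 * m ^ 2)) * ∫ θ in Ioo (-π) π, g θ) := by
        rw [integral_complex_polar m hm A g hApolar]
        ring

/-- orthogonality relations of the kernel elements `Z¹, Z²`
against the weight `|x|² e^{W_{λ,b}}`. -/
theorem stmt_18 (lam : ℝ) (hlam : 0 < lam) (b : ℂ) :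
    (∫ x : ℂ, (Z1 lam b x) ^ 2 * ‖x‖ ^ 2 * eW lam b x) = 4 * π / 3 ∧
    (∫ x : ℂ, (Z2 lam b x) ^ 2 * ‖x‖ ^ 2 * eW lam b x) = 4 * π / 3 ∧
    (∫ x : ℂ, Z1 lam b x * Z2 lam b x * ‖x‖ ^ 2 * eW lam b x) = 0 := by
  have hm : (0:ℝ) < lam / 32 := by positivity
  have hD : ∀ x : ℂ, (0:ℝ) < lam / 32 + ‖x ^ 2 - b‖ ^ 2 := fun x => by positivity
  have hsq : Real.sqrt (lam / 32) ^ 2 = lam / 32 := Real.sq_sqrt hm.le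
  refine ⟨?_, ?_, ?_⟩
  · have e1 : ∀ x : ℂ, (Z1 lam b x) ^ 2 * ‖x‖ ^ 2 * eW lam b x
        = (lam * (lam / 32)) *
          ((x ^ 2 - b).re ^ 2 / (lam / 32 + ‖x ^ 2 - b‖ ^ 2) ^ 4) * ‖x‖ ^ 2 := by
      intro x
      have h := (hD x).ne'
      rw [Z1, eW, div_pow, mul_pow, hsq]
      field_simp
    rw [show (fun x : ℂ => (Z1 lam b x) ^ 2 * ‖x‖ ^ 2 * eW lam b x)
        = fun x : ℂ => (lam * (lam / 32)) *
          ((x ^ 2 - b).re ^ 2 / (lam / 32 + ‖x ^ 2 - b‖ ^ 2) ^ 4) * ‖x‖ ^ 2 from funext e1]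
    have hb1 : ∀ y : ℂ, |y.re ^ 2| ≤ ‖y‖ ^ 2 := fun y => by
      rw [abs_of_nonneg (sq_nonneg _), norm_sq_complex]; nlinarith [sq_nonneg y.im]
    have hp1 : ∀ r θ : ℝ, (Complex.polarCoord.symm (r, θ)).re ^ 2 = r ^ 2 * cos θ ^ 2 :=
      fun r θ => by rw [polar_re]; ring
    rw [main_computation lam hlam b (fun y => y.re ^ 2) (fun θ => cos θ ^ 2)
      (Complex.continuous_re.pow 2) hb1 hp1, ang_cos]
    field_simp
    ring
  · have e1 : ∀ x : ℂ, (Z2 lam b x) ^ 2 * ‖x‖ ^ 2 * eW lam b x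
        = (lam * (lam / 32)) *
          ((x ^ 2 - b).im ^ 2 / (lam / 32 + ‖x ^ 2 - b‖ ^ 2) ^ 4) * ‖x‖ ^ 2 := by
      intro x
      have h := (hD x).ne'
      rw [Z2, eW, div_pow, mul_pow, hsq]
      field_simp
    rw [show (fun x : ℂ => (Z2 lam b x) ^ 2 * ‖x‖ ^ 2 * eW lam b x)
        = fun x : ℂ => (lam * (lam / 32)) *
          ((x ^ 2 - b).im ^ 2 / (lam / 32 + ‖x ^ 2 - b‖ ^ 2) ^ 4) * ‖x‖ ^ 2 from funext e1]
    have hb2 : ∀ y : ℂ, |y.im ^ 2| ≤ ‖y‖ ^ 2 := fun y => by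
      rw [abs_of_nonneg (sq_nonneg _), norm_sq_complex]; nlinarith [sq_nonneg y.re]
    have hp2 : ∀ r θ : ℝ, (Complex.polarCoord.symm (r, θ)).im ^ 2 = r ^ 2 * sin θ ^ 2 :=
      fun r θ => by rw [polar_im]; ring
    rw [main_computation lam hlam b (fun y => y.im ^ 2) (fun θ => sin θ ^ 2)
      (Complex.continuous_im.pow 2) hb2 hp2, ang_sin]
    field_simp
    ring
  · have e1 : ∀ x : ℂ, Z1 lam b x * Z2 lam b x * ‖x‖ ^ 2 * eW lam b x
        = (lam * (lam / 32)) *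
          (((x ^ 2 - b).re * (x ^ 2 - b).im) / (lam / 32 + ‖x ^ 2 - b‖ ^ 2) ^ 4) * ‖x‖ ^ 2 := by
      intro x
      have h := (hD x).ne'
      rw [Z1, Z2, eW, div_mul_div_comm]
      have hnum : Real.sqrt (lam / 32) * (x ^ 2 - b).re * (Real.sqrt (lam / 32) * (x ^ 2 - b).im)
          = (lam / 32) * ((x ^ 2 - b).re * (x ^ 2 - b).im) := by
        calc Real.sqrt (lam / 32) * (x ^ 2 - b).re * (Real.sqrt (lam / 32) * (x ^ 2 - b).im)
            = (Real.sqrt (lam / 32) * Real.sqrt (lam / 32)) *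
              ((x ^ 2 - b).re * (x ^ 2 - b).im) := by ring
          _ = (lam / 32) * ((x ^ 2 - b).re * (x ^ 2 - b).im) := by
              rw [Real.mul_self_sqrt hm.le]
      rw [hnum]
      field_simp
    rw [show (fun x : ℂ => Z1 lam b x * Z2 lam b x * ‖x‖ ^ 2 * eW lam b x)
        = fun x : ℂ => (lam * (lam / 32)) *
          (((x ^ 2 - b).re * (x ^ 2 - b).im) / (lam / 32 + ‖x ^ 2 - b‖ ^ 2) ^ 4) * ‖x‖ ^ 2
        from funext e1]
    have hb3 : ∀ y : ℂ, |y.re * y.im| ≤ ‖y‖ ^ 2 := fun y => by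
      rw [abs_mul, norm_sq_complex]
      nlinarith [sq_nonneg (|y.re| - |y.im|), sq_abs y.re, sq_abs y.im, abs_nonneg y.re,
        abs_nonneg y.im]
    have hp3 : ∀ r θ : ℝ, (Complex.polarCoord.symm (r, θ)).re * (Complex.polarCoord.symm (r, θ)).im
        = r ^ 2 * (cos θ * sin θ) := fun r θ => by rw [polar_re, polar_im]; ring
    rw [main_computation lam hlam b (fun y => y.re * y.im) (fun θ => cos θ * sin θ)
      (Complex.continuous_re.mul Complex.continuous_im) hb3 hp3, ang_cross]
    ring
end
end
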